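/- arXiv:1110.4283 — 10 statements merged into one kernel-verified Lean document; each statement's English description precedes it below -/
import Mathlib

section
/- If the intersection graph of a family of n subcubes of {0,1}^d contains no clique of size r+1, then the number of intersecting pairs of subcubes is at most binom(r,2)·2^d. -/
/-- The subcube of `{0,1}^d` represented by `u ∈ {0,1,*}^d` (`none` = `*`). -/
def cubeSet {d : ℕ} (u : Fin d → Option Bool) : Set (Fin d → Bool) :=
  {x | ∀ i : Fin d, ∀ b : Bool, u i = some b → x i = b}

/-- If the intersection graph of a family of `n` subcubes of `{0,1}^d` has no clique
of size `r+1`, then the number of intersecting pairs is at most `C(r,2) * 2^d`. -/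
theorem subcubes_Kr1_free_edge_bound {d n r : ℕ} (A : Fin n → (Fin d → Option Bool))
    (h : ¬ ∃ s : Finset (Fin n), s.card = r + 1 ∧
      ∀ i ∈ s, ∀ j ∈ s, i ≠ j → (cubeSet (A i) ∩ cubeSet (A j)).Nonempty) :
    {p : Fin n × Fin n | p.1 < p.2 ∧
        (cubeSet (A p.1) ∩ cubeSet (A p.2)).Nonempty}.ncard ≤ Nat.choose r 2 * 2 ^ d := by
  classical
  set P : Finset (Fin n × Fin n) := Finset.univ.filter
    (fun p => p.1 < p.2 ∧ (cubeSet (A p.1) ∩ cubeSet (A p.2)).Nonempty) with hP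
  have hset : {p : Fin n × Fin n | p.1 < p.2 ∧
      (cubeSet (A p.1) ∩ cubeSet (A p.2)).Nonempty} = ↑P := by
    ext p; simp [hP]
  rw [hset, Set.ncard_coe_finset]
  -- total witness function
  let w : Fin n × Fin n → (Fin d → Bool) := fun p =>
    if hne : (cubeSet (A p.1) ∩ cubeSet (A p.2)).Nonempty then hne.choose
    else fun _ => false
  have hw : ∀ p ∈ P, w p ∈ cubeSet (A p.1) ∩ cubeSet (A p.2) := by
    intro p hp
    simp only [hP, Finset.mem_filter] at hp
    simp only [w, dif_pos hp.2.2]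
    exact hp.2.2.choose_spec
  have hfib : P.card = ∑ x : Fin d → Bool, (P.filter (fun p => w p = x)).card := by
    exact Finset.card_eq_sum_card_fiberwise (fun p _ => Finset.mem_univ (w p))
  rw [hfib]
  have hbound : ∀ x : Fin d → Bool, (P.filter (fun p => w p = x)).card ≤ Nat.choose r 2 := by
    intro x
    set S : Finset (Fin n) := Finset.univ.filter (fun i => x ∈ cubeSet (A i)) with hS
    have hScard : S.card ≤ r := by
      by_contra hc
      push_neg at hc
      obtain ⟨s, hs_sub, hs_card⟩ := Finset.exists_subset_card_eq hc
      apply h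
      refine ⟨s, hs_card, fun i hi j hj hij => ?_⟩
      have hiS := hs_sub hi
      have hjS := hs_sub hj
      simp only [hS, Finset.mem_filter] at hiS hjS
      exact ⟨x, hiS.2, hjS.2⟩
    calc (P.filter (fun p => w p = x)).card
        ≤ (S.powersetCard 2).card := by
          apply Finset.card_le_card_of_injOn (fun p => ({p.1, p.2} : Finset (Fin n)))
          · intro p hp
            simp only [Finset.mem_coe, Finset.mem_filter] at hp
            obtain ⟨hpP, hpx⟩ := hp
            have hlt : p.1 < p.2 := by
              simp only [hP, Finset.mem_filter] at hpP; exact hpP.2.1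
            have hmem := hw p hpP
            rw [hpx] at hmem
            rw [Finset.mem_coe, Finset.mem_powersetCard]
            constructor
            · intro i hi
              simp only [Finset.mem_insert, Finset.mem_singleton] at hi
              rcases hi with rfl | rfl <;> simp only [hS, Finset.mem_filter] <;>
                exact ⟨Finset.mem_univ _, by first | exact hmem.1 | exact hmem.2⟩
            · rw [Finset.card_insert_of_notMem (by simp [hlt.ne]), Finset.card_singleton]
          · intro p hp q hq heq
            simp only [Finset.mem_coe, Finset.mem_filter, hP] at hp hq
            have hp1 : p.1 < p.2 := hp.1.2.1
            have hq1 : q.1 < q.2 := hq.1.2.1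
            replace heq : ({p.1, p.2} : Finset (Fin n)) = {q.1, q.2} := heq
            have h1 : p.1 ∈ ({q.1, q.2} : Finset (Fin n)) := by rw [← heq]; simp
            have h2 : p.2 ∈ ({q.1, q.2} : Finset (Fin n)) := by rw [← heq]; simp
            have h3 : q.1 ∈ ({p.1, p.2} : Finset (Fin n)) := by rw [heq]; simp
            simp only [Finset.mem_insert, Finset.mem_singleton] at h1 h2 h3
            have v1 : p.1.val = q.1.val ∨ p.1.val = q.2.val := by
              rcases h1 with e | e <;> simp [e]
            have v2 : p.2.val = q.1.val ∨ p.2.val = q.2.val := by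
              rcases h2 with e | e <;> simp [e]
            have v3 : q.1.val = p.1.val ∨ q.1.val = p.2.val := by
              rcases h3 with e | e <;> simp [e]
            have l1 : p.1.val < p.2.val := hp1
            have l2 : q.1.val < q.2.val := hq1
            have : p.1.val = q.1.val ∧ p.2.val = q.2.val := by omega
            exact Prod.ext (Fin.ext this.1) (Fin.ext this.2)
      _ = (S.card).choose 2 := by rw [Finset.card_powersetCard]
      _ ≤ Nat.choose r 2 := Nat.choose_le_choose 2 hScard
  calc ∑ x : Fin d → Bool, (P.filter (fun p => w p = x)).card
      ≤ ∑ _x : Fin d → Bool, Nat.choose r 2 := Finset.sum_le_sum (fun x _ => hbound x)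
    _ = Nat.choose r 2 * 2 ^ d := by
        rw [Finset.sum_const, smul_eq_mul, Finset.card_univ, Fintype.card_fun]
        simp [Nat.mul_comm]
end

section
/- Let P_1, ..., P_r be pairwise disjoint t-subsets of {1,...,d} with t = ⌊d/r⌋, and let V be the family of all u ∈ {0,1,*}^d with F(u) = {1,...,d} \ P_i for some i. Then any two intersecting subcubes in V intersect in exactly one point of {0,1}^d, every point of {0,1}^d is contained in exactly r subcubes of V, and the intersection graph of V has exactly binom(r,2)·2^d edges. -/
/-- The fixed set `F(u)` of a subcube vector. -/
def fixedSet {d : ℕ} (u : Fin d → Option Bool) : Finset (Fin d) :=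
  Finset.univ.filter (fun i => u i ≠ none)

def ufun {d : ℕ} (S : Finset (Fin d)) (x : Fin d → Bool) : Fin d → Option Bool :=
  fun k => if k ∈ S then none else some (x k)

lemma fixedSet_ufun {d : ℕ} (S : Finset (Fin d)) (x : Fin d → Bool) :
    fixedSet (ufun S x) = Finset.univ \ S := by
  ext k
  by_cases h : k ∈ S <;> simp [fixedSet, ufun, h]

lemma mem_cubeSet_ufun {d : ℕ} (S : Finset (Fin d)) (x : Fin d → Bool) :
    x ∈ cubeSet (ufun S x) := by
  intro i b h
  by_cases hi : i ∈ S <;> simp [ufun, hi] at h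
  exact h

lemma eq_ufun {d : ℕ} {S : Finset (Fin d)} {u : Fin d → Option Bool} {x : Fin d → Bool}
    (hu : fixedSet u = Finset.univ \ S) (hx : x ∈ cubeSet u) : u = ufun S x := by
  funext k
  by_cases h : k ∈ S
  · have : k ∉ fixedSet u := by rw [hu]; simp [h]
    simp [fixedSet] at this
    simp [ufun, h, this]
  · have hk : k ∈ fixedSet u := by rw [hu]; simp [h]
    simp [fixedSet] at hk
    obtain ⟨b, hb⟩ := Option.ne_none_iff_exists'.mp hk
    have := hx k b hb
    simp [ufun, h, hb, this]

lemma ufun_eq_S {d : ℕ} {S S' : Finset (Fin d)} {x x' : Fin d → Bool}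
    (h : ufun S x = ufun S' x') : S = S' := by
  ext k
  have := congrFun h k
  by_cases h1 : k ∈ S <;> by_cases h2 : k ∈ S' <;> simp [ufun, h1, h2] at this ⊢

lemma ufun_eq_agree {d : ℕ} {S S' : Finset (Fin d)} {x x' : Fin d → Bool}
    (h : ufun S x = ufun S' x') {k : Fin d} (hk : k ∉ S) : x k = x' k := by
  have := congrFun h k
  have h2 : k ∉ S' := by rw [← ufun_eq_S h]; exact hk
  simpa [ufun, hk, h2] using this

/-- For pairwise disjoint `t`-sets `P₁,…,P_r` (`t = ⌊d/r⌋`, `r ≤ d`), the family `V`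
of all subcubes with fixed set `[d] \ P i` for some `i` satisfies: intersecting distinct
subcubes meet in exactly one point, every point of `{0,1}^d` lies in exactly `r`
members of `V`, and the intersection graph of `V` has exactly `C(r,2)·2^d` edges
(i.e. `2·C(r,2)·2^d` ordered intersecting pairs). -/
theorem codim_complement_construction {d r t : ℕ}
    (hr : 1 ≤ r) (hrd : r ≤ d) (ht : t = d / r)
    (P : Fin r → Finset (Fin d))
    (hdisj : ∀ i j : Fin r, i ≠ j → Disjoint (P i) (P j))
    (hcard : ∀ i, (P i).card = t)
    (V : Set (Fin d → Option Bool))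
    (hV : V = {u | ∃ i : Fin r, fixedSet u = Finset.univ \ P i}) :
    (∀ u ∈ V, ∀ v ∈ V, u ≠ v → (cubeSet u ∩ cubeSet v).Nonempty →
        ∃! x : Fin d → Bool, x ∈ cubeSet u ∩ cubeSet v) ∧
    (∀ x : Fin d → Bool, {u ∈ V | x ∈ cubeSet u}.ncard = r) ∧
    {p : (Fin d → Option Bool) × (Fin d → Option Bool) |
        p.1 ∈ V ∧ p.2 ∈ V ∧ p.1 ≠ p.2 ∧ (cubeSet p.1 ∩ cubeSet p.2).Nonempty}.ncard
      = 2 * (Nat.choose r 2 * 2 ^ d) := by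
  have ht1 : 1 ≤ t := by
    rw [ht]; exact (Nat.one_le_div_iff (by omega)).mpr hrd
  have hPinj : Function.Injective P := by
    intro i j hij
    by_contra hne
    have hd := hdisj i j hne
    rw [hij, disjoint_self] at hd
    have := hcard j
    rw [hd] at this
    simp at this
    omega
  -- canonical description of members of V through a point x
  have hmemV : ∀ (u : Fin d → Option Bool) (x : Fin d → Bool),
      (u ∈ V ∧ x ∈ cubeSet u) ↔ ∃ i, u = ufun (P i) x := by
    intro u x
    constructor
    · rintro ⟨hu, hx⟩
      rw [hV] at hu
      obtain ⟨i, hi⟩ := hu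
      exact ⟨i, eq_ufun hi hx⟩
    · rintro ⟨i, rfl⟩
      refine ⟨?_, mem_cubeSet_ufun _ _⟩
      rw [hV]
      exact ⟨i, fixedSet_ufun _ _⟩
  refine ⟨?_, ?_, ?_⟩
  · -- unique intersection point
    rintro u hu v hv huv ⟨x, hx⟩
    obtain ⟨i, hiu⟩ := (hmemV u x).mp ⟨hu, hx.1⟩
    obtain ⟨j, hjv⟩ := (hmemV v x).mp ⟨hv, hx.2⟩
    have hij : i ≠ j := by
      rintro rfl; exact huv (hiu.trans hjv.symm)
    refine ⟨x, hx, ?_⟩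
    intro y hy
    funext k
    have hk : k ∉ P i ∨ k ∉ P j := by
      by_contra h
      push_neg at h
      exact (Finset.disjoint_left.mp (hdisj i j hij)) h.1 h.2
    rcases hk with hk | hk
    · have h1 : u k = some (x k) := by rw [hiu]; simp [ufun, hk]
      exact hy.1 k (x k) h1
    · have h1 : v k = some (x k) := by rw [hjv]; simp [ufun, hk]
      exact hy.2 k (x k) h1
  · -- every point lies in exactly r members
    intro x
    have hset : {u ∈ V | x ∈ cubeSet u} = (fun i => ufun (P i) x) '' Set.univ := by
      ext u
      simp only [Set.mem_setOf_eq, Set.image_univ, Set.mem_range]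
      constructor
      · rintro ⟨hu, hx⟩
        obtain ⟨i, hi⟩ := (hmemV u x).mp ⟨hu, hx⟩
        exact ⟨i, hi.symm⟩
      · rintro ⟨i, rfl⟩
        exact (hmemV _ x).mpr ⟨i, rfl⟩
    have hinj : Function.Injective (fun i => ufun (P i) x) := by
      intro i j h
      exact hPinj (ufun_eq_S h)
    rw [hset, Set.ncard_image_of_injective _ hinj, Set.ncard_univ]
    simp
  · -- edge count
    classical
    set g : (Fin r × Fin r) × (Fin d → Bool) →
        (Fin d → Option Bool) × (Fin d → Option Bool) :=
      fun q => (ufun (P q.1.1) q.2, ufun (P q.1.2) q.2) with hg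
    set T : Finset ((Fin r × Fin r) × (Fin d → Bool)) :=
      (Finset.univ.offDiag ×ˢ Finset.univ) with hT
    have hinjT : Set.InjOn g T := by
      rintro ⟨⟨i, j⟩, x⟩ hq ⟨⟨i', j'⟩, x'⟩ hq' h
      simp only [hT, Finset.coe_product, Set.mem_prod, Finset.mem_coe,
        Finset.mem_offDiag] at hq hq'
      have h1 : ufun (P i) x = ufun (P i') x' := congrArg Prod.fst h
      have h2 : ufun (P j) x = ufun (P j') x' := congrArg Prod.snd h
      have hii : i = i' := hPinj (ufun_eq_S h1)
      have hjj : j = j' := hPinj (ufun_eq_S h2)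
      have hij : i ≠ j := hq.1.2.2
      have hxx : x = x' := by
        funext k
        have hk : k ∉ P i ∨ k ∉ P j := by
          by_contra hc
          push_neg at hc
          exact (Finset.disjoint_left.mp (hdisj i j hij)) hc.1 hc.2
        rcases hk with hk | hk
        · exact ufun_eq_agree h1 hk
        · exact ufun_eq_agree h2 hk
      simp [hii, hjj, hxx]
    have hEq : {p : (Fin d → Option Bool) × (Fin d → Option Bool) |
        p.1 ∈ V ∧ p.2 ∈ V ∧ p.1 ≠ p.2 ∧ (cubeSet p.1 ∩ cubeSet p.2).Nonempty}
        = ↑(T.image g) := by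
      ext ⟨u, v⟩
      simp only [Set.mem_setOf_eq, Finset.coe_image, Set.mem_image, Finset.mem_coe]
      constructor
      · rintro ⟨hu, hv, huv, ⟨x, hx⟩⟩
        obtain ⟨i, hiu⟩ := (hmemV u x).mp ⟨hu, hx.1⟩
        obtain ⟨j, hjv⟩ := (hmemV v x).mp ⟨hv, hx.2⟩
        have hij : i ≠ j := by
          rintro rfl; exact huv (hiu.trans hjv.symm)
        refine ⟨⟨⟨i, j⟩, x⟩, ?_, ?_⟩
        · simp [hT, Finset.mem_offDiag, hij]
        · simp [hg, hiu, hjv]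
      · rintro ⟨⟨⟨i, j⟩, x⟩, hq, heq⟩
        obtain rfl : ufun (P i) x = u := congrArg Prod.fst heq
        obtain rfl : ufun (P j) x = v := congrArg Prod.snd heq
        simp only [hT, Finset.mem_product, Finset.mem_offDiag] at hq
        have hij : i ≠ j := hq.1.2.2
        have hu : ufun (P i) x ∈ V ∧ x ∈ cubeSet (ufun (P i) x) :=
          (hmemV _ x).mpr ⟨i, rfl⟩
        have hv : ufun (P j) x ∈ V ∧ x ∈ cubeSet (ufun (P j) x) :=
          (hmemV _ x).mpr ⟨j, rfl⟩
        refine ⟨hu.1, hv.1, ?_, ⟨x, hu.2, hv.2⟩⟩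
        intro hc
        exact hij (hPinj (ufun_eq_S hc))
    rw [hEq, Set.ncard_coe_finset, Finset.card_image_of_injOn hinjT]
    rw [hT, Finset.card_product, Finset.offDiag_card]
    simp only [Finset.card_univ, Fintype.card_fin, Fintype.card_fun, Fintype.card_bool]
    have h2 : 2 * Nat.choose r 2 = r * r - r := by
      obtain ⟨k, rfl⟩ : ∃ k, r = k + 1 := ⟨r - 1, by omega⟩
      rw [Nat.choose_two_right]
      have he : 2 ∣ (k + 1) * ((k + 1) - 1) := by
        simpa [mul_comm] using (Nat.even_mul_succ_self k).two_dvd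
      rw [Nat.mul_div_cancel' he]
      simp only [Nat.add_sub_cancel]
      have : (k + 1) * (k + 1) = (k + 1) * k + (k + 1) := by ring
      omega
    rw [← mul_assoc, h2]
end

section
/- Suppose n < n' ≤ r·2^d and G is the intersection graph of a multiset of n subcubes of {0,1}^d in which no point of {0,1}^d lies in more than r subcubes. Then there is a multiset of n' subcubes of {0,1}^d, in which no point lies in more than r subcubes, whose intersection graph has at least as many edges as G. -/
namespace SubcubeAux

noncomputable def ecard {d n : ℕ} (A : Fin n → (Fin d → Option Bool)) : ℕ :=
  {p : Fin n × Fin n | p.1 ≠ p.2 ∧ (cubeSet (A p.1) ∩ cubeSet (A p.2)).Nonempty}.ncard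

lemma mem_cubeSet_update {d : ℕ} (u : Fin d → Option Bool) (k0 : Fin d)
    (hk : u k0 = none) (b : Bool) (x : Fin d → Bool) :
    x ∈ cubeSet (Function.update u k0 (some b)) ↔ x ∈ cubeSet u ∧ x k0 = b := by
  constructor
  · intro hx
    refine ⟨fun i b' hib' => ?_, hx k0 b (by simp)⟩
    have hik : i ≠ k0 := by rintro rfl; rw [hk] at hib'; cases hib'
    exact hx i b' (by rwa [Function.update_of_ne hik])
  · rintro ⟨hx, hxk⟩ i b' hib'
    by_cases hik : i = k0
    · subst hik
      rw [Function.update_self] at hib'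
      cases hib'; exact hxk
    · exact hx i b' (by rwa [Function.update_of_ne hik] at hib')

lemma mem_cubeSet_some {d : ℕ} (y x : Fin d → Bool) :
    x ∈ cubeSet (fun k => some (y k)) ↔ x = y := by
  constructor
  · intro hx; funext k; exact hx k (y k) rfl
  · rintro rfl k b hb; cases hb; rfl

lemma step {d r n : ℕ} (hn : n < r * 2 ^ d) (A : Fin n → (Fin d → Option Bool))
    (hA : ∀ x : Fin d → Bool, {i : Fin n | x ∈ cubeSet (A i)}.ncard ≤ r) :
    ∃ B : Fin (n + 1) → (Fin d → Option Bool),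
      (∀ x : Fin d → Bool, {i : Fin (n + 1) | x ∈ cubeSet (B i)}.ncard ≤ r) ∧
      ecard A ≤ ecard B := by
  classical
  by_cases hfree : ∃ i k, A i k = none
  · -- split a cube with a free coordinate into its two halves
    obtain ⟨i0, k0, hk⟩ := hfree
    set u0 : Fin d → Option Bool := Function.update (A i0) k0 (some false) with hu0
    set u1 : Fin d → Option Bool := Function.update (A i0) k0 (some true) with hu1
    have hm0 : ∀ x, x ∈ cubeSet u0 ↔ x ∈ cubeSet (A i0) ∧ x k0 = false :=
      mem_cubeSet_update _ _ hk false
    have hm1 : ∀ x, x ∈ cubeSet u1 ↔ x ∈ cubeSet (A i0) ∧ x k0 = true :=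
      mem_cubeSet_update _ _ hk true
    set B : Fin (n + 1) → (Fin d → Option Bool) :=
      Fin.snoc (Function.update A i0 u0) u1 with hB
    have hBc : ∀ j : Fin n, j ≠ i0 → B j.castSucc = A j := by
      intro j hj; rw [hB, Fin.snoc_castSucc, Function.update_of_ne hj]
    have hBc0 : B i0.castSucc = u0 := by rw [hB, Fin.snoc_castSucc, Function.update_self]
    have hBl : B (Fin.last n) = u1 := by rw [hB, Fin.snoc_last]
    set f : Fin (n + 1) → Fin n := Fin.snoc (fun j => j) i0 with hf
    have hfc : ∀ j : Fin n, f j.castSucc = j := by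
      intro j; simp [hf, Fin.snoc_castSucc]
    have hfl : f (Fin.last n) = i0 := by simp [hf, Fin.snoc_last]
    have hmemB : ∀ (x : Fin d → Bool) (j : Fin (n + 1)),
        x ∈ cubeSet (B j) → x ∈ cubeSet (A (f j)) := by
      intro x j hx
      rcases Fin.eq_castSucc_or_eq_last j with ⟨j', rfl⟩ | rfl
      · rw [hfc]
        by_cases hji : j' = i0
        · subst hji
          rw [hBc0, hm0] at hx
          exact hx.1
        · rwa [hBc j' hji] at hx
      · rw [hfl]
        rw [hBl, hm1] at hx
        exact hx.1
    set lift : (Fin d → Bool) → Fin n → Fin (n + 1) := fun x i =>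
      if i = i0 then (if x k0 then Fin.last n else Fin.castSucc i0) else Fin.castSucc i
      with hlift
    have hflift : ∀ x i, f (lift x i) = i := by
      intro x i
      by_cases hi : i = i0
      · subst hi
        by_cases hx : x k0 <;> simp [hlift, hx, hfl, hfc]
      · simp [hlift, hi, hfc]
    have hliftmem : ∀ (x : Fin d → Bool) (i : Fin n),
        x ∈ cubeSet (A i) → x ∈ cubeSet (B (lift x i)) := by
      intro x i hx
      by_cases hi : i = i0
      · subst hi
        by_cases hxk : x k0
        · simp only [hlift, if_pos rfl, if_pos hxk]
          rw [hBl, hm1]; exact ⟨hx, hxk⟩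
        · simp only [hlift, if_pos rfl, if_neg hxk]
          rw [hBc0, hm0]; exact ⟨hx, by simpa using hxk⟩
      · simp only [hlift, if_neg hi]
        rwa [hBc i hi]
    refine ⟨B, ?_, ?_⟩
    · -- cover condition
      intro x
      have h1 : Set.InjOn f {j | x ∈ cubeSet (B j)} := by
        intro j1 hj1 j2 hj2 heq
        simp only [Set.mem_setOf_eq] at hj1 hj2
        rcases Fin.eq_castSucc_or_eq_last j1 with ⟨a, rfl⟩ | rfl <;>
          rcases Fin.eq_castSucc_or_eq_last j2 with ⟨b, rfl⟩ | rfl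
        · rw [hfc, hfc] at heq; exact congrArg _ heq
        · rw [hfc, hfl] at heq
          subst heq
          rw [hBc0, hm0] at hj1
          rw [hBl, hm1] at hj2
          rw [hj1.2] at hj2
          exact absurd hj2.2 (by simp)
        · rw [hfc, hfl] at heq
          subst heq
          rw [hBc0, hm0] at hj2
          rw [hBl, hm1] at hj1
          rw [hj2.2] at hj1
          exact absurd hj1.2 (by simp)
        · rfl
      calc {j | x ∈ cubeSet (B j)}.ncard
          = (f '' {j | x ∈ cubeSet (B j)}).ncard := (Set.ncard_image_of_injOn h1).symm
        _ ≤ {i | x ∈ cubeSet (A i)}.ncard := by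
            apply Set.ncard_le_ncard _ (Set.toFinite _)
            rintro _ ⟨j, hj, rfl⟩
            exact hmemB x j hj
        _ ≤ r := hA x
    · -- edge count
      set φ : Fin n × Fin n → (Fin d → Bool) := fun p =>
        if hp : (cubeSet (A p.1) ∩ cubeSet (A p.2)).Nonempty then hp.choose
        else fun _ => false with hφ
      rw [ecard, ecard]
      apply Set.ncard_le_ncard_of_injOn
        (fun p : Fin n × Fin n => (lift (φ p) p.1, lift (φ p) p.2))
      · rintro ⟨i, j⟩ ⟨hij, hne⟩
        have hx := hne.choose_spec
        have hφp : φ (i, j) = hne.choose := by rw [hφ]; simp only [dif_pos hne]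
        refine ⟨?_, ?_⟩
        · intro h
          apply hij
          have := congrArg f h
          rw [hflift, hflift] at this
          exact this
        · refine ⟨φ (i, j), ?_, ?_⟩
          · exact hliftmem _ _ (by rw [hφp]; exact hx.1)
          · exact hliftmem _ _ (by rw [hφp]; exact hx.2)
      · rintro ⟨a, b⟩ - ⟨c, e⟩ - h
        simp only [Prod.mk.injEq] at h ⊢
        constructor
        · have := congrArg f h.1
          rwa [hflift, hflift] at this
        · have := congrArg f h.2
          rwa [hflift, hflift] at this
  · -- all cubes are singletons; duplicate an under-covered point
    push_neg at hfree
    set pt : Fin n → Fin d → Bool := fun i k => (A i k).getD false with hpt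
    have hAeq : ∀ i, A i = fun k => some (pt i k) := by
      intro i; funext k
      rcases h : A i k with _ | b
      · exact absurd h (hfree i k)
      · simp [hpt, h]
    have hmem : ∀ (x : Fin d → Bool) (i : Fin n), x ∈ cubeSet (A i) ↔ x = pt i := by
      intro x i; rw [hAeq i]; exact mem_cubeSet_some _ _
    have hx0 : ∃ x0 : Fin d → Bool, {i : Fin n | x0 ∈ cubeSet (A i)}.ncard < r := by
      by_contra hall
      push_neg at hall
      have hfib : ∀ x : Fin d → Bool,
          r ≤ (Finset.univ.filter fun i : Fin n => pt i = x).card := by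
        intro x
        have hset : {i : Fin n | x ∈ cubeSet (A i)} =
            ↑(Finset.univ.filter fun i : Fin n => pt i = x) := by
          ext i; simp [hmem, eq_comm]
        have h := hall x
        rwa [hset, Set.ncard_coe_finset] at h
      have hcard : (Finset.univ : Finset (Fin n)).card =
          ∑ x : Fin d → Bool, (Finset.univ.filter fun i : Fin n => pt i = x).card :=
        Finset.card_eq_sum_card_fiberwise (fun i _ => Finset.mem_univ (pt i))
      have hge : r * 2 ^ d ≤ n := by
        calc r * 2 ^ d = ∑ _x : Fin d → Bool, r := by
              simp [Finset.sum_const, mul_comm]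
          _ ≤ ∑ x : Fin d → Bool, (Finset.univ.filter fun i : Fin n => pt i = x).card :=
              Finset.sum_le_sum fun x _ => hfib x
          _ = n := by rw [← hcard, Finset.card_univ, Fintype.card_fin]
      omega
    obtain ⟨x0, hx0⟩ := hx0
    set B : Fin (n + 1) → (Fin d → Option Bool) := Fin.snoc A (fun k => some (x0 k)) with hB
    have hBc : ∀ j : Fin n, B j.castSucc = A j := by
      intro j; simp [hB, Fin.snoc_castSucc]
    have hBl : B (Fin.last n) = fun k => some (x0 k) := by simp [hB, Fin.snoc_last]
    refine ⟨B, ?_, ?_⟩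
    · intro x
      have hsub : {j | x ∈ cubeSet (B j)} ⊆
          insert (Fin.last n) (Fin.castSucc '' {i : Fin n | x ∈ cubeSet (A i)}) := by
        intro j hj
        simp only [Set.mem_setOf_eq] at hj
        rcases Fin.eq_castSucc_or_eq_last j with ⟨j', rfl⟩ | rfl
        · rw [hBc] at hj
          exact Set.mem_insert_of_mem _ ⟨j', hj, rfl⟩
        · exact Set.mem_insert _ _
      by_cases hxx : x = x0
      · subst hxx
        calc {j | x ∈ cubeSet (B j)}.ncard
            ≤ (insert (Fin.last n) (Fin.castSucc '' {i : Fin n | x ∈ cubeSet (A i)})).ncard :=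
              Set.ncard_le_ncard hsub (Set.toFinite _)
          _ ≤ (Fin.castSucc '' {i : Fin n | x ∈ cubeSet (A i)}).ncard + 1 :=
              Set.ncard_insert_le _ _
          _ = {i : Fin n | x ∈ cubeSet (A i)}.ncard + 1 := by
              rw [Set.ncard_image_of_injective _ (Fin.castSucc_injective n)]
          _ ≤ r := by omega
      · have hlast : Fin.last n ∉ {j | x ∈ cubeSet (B j)} := by
          intro hj
          simp only [Set.mem_setOf_eq, hBl] at hj
          exact hxx ((mem_cubeSet_some x0 x).1 hj)
        have hsub' : {j | x ∈ cubeSet (B j)} ⊆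
            Fin.castSucc '' {i : Fin n | x ∈ cubeSet (A i)} := by
          intro j hj
          rcases hsub hj with h | h
          · exact absurd (h ▸ hj) hlast
          · exact h
        calc {j | x ∈ cubeSet (B j)}.ncard
            ≤ (Fin.castSucc '' {i : Fin n | x ∈ cubeSet (A i)}).ncard :=
              Set.ncard_le_ncard hsub' (Set.toFinite _)
          _ = {i : Fin n | x ∈ cubeSet (A i)}.ncard := by
              rw [Set.ncard_image_of_injective _ (Fin.castSucc_injective n)]
          _ ≤ r := hA x
    · rw [ecard, ecard]
      apply Set.ncard_le_ncard_of_injOn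
        (fun p : Fin n × Fin n => (Fin.castSucc p.1, Fin.castSucc p.2))
      · rintro ⟨i, j⟩ ⟨hij, hne⟩
        refine ⟨?_, ?_⟩
        · intro h
          exact hij (Fin.castSucc_injective n h)
        · rw [hBc, hBc]
          exact hne
      · rintro ⟨a, b⟩ - ⟨c, e⟩ - h
        simp only [Prod.mk.injEq] at h ⊢
        exact ⟨Fin.castSucc_injective n h.1, Fin.castSucc_injective n h.2⟩

end SubcubeAux

/-- If `n < n' ≤ r·2^d` and a family of `n` subcubes covers no point more than `r`
times, then there is a family of `n'` subcubes covering no point more than `r` times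
whose intersection graph has at least as many edges. -/
theorem extend_subcube_family {d r n n' : ℕ} (h1 : n < n') (h2 : n' ≤ r * 2 ^ d)
    (A : Fin n → (Fin d → Option Bool))
    (hA : ∀ x : Fin d → Bool, {i : Fin n | x ∈ cubeSet (A i)}.ncard ≤ r) :
    ∃ B : Fin n' → (Fin d → Option Bool),
      (∀ x : Fin d → Bool, {i : Fin n' | x ∈ cubeSet (B i)}.ncard ≤ r) ∧
      {p : Fin n × Fin n | p.1 ≠ p.2 ∧
          (cubeSet (A p.1) ∩ cubeSet (A p.2)).Nonempty}.ncard ≤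
        {p : Fin n' × Fin n' | p.1 ≠ p.2 ∧
          (cubeSet (B p.1) ∩ cubeSet (B p.2)).Nonempty}.ncard := by
  have key : ∀ m, n ≤ m → m ≤ r * 2 ^ d →
      ∃ B : Fin m → (Fin d → Option Bool),
        (∀ x : Fin d → Bool, {i : Fin m | x ∈ cubeSet (B i)}.ncard ≤ r) ∧
        SubcubeAux.ecard A ≤ SubcubeAux.ecard B := by
    intro m hm
    induction m, hm using Nat.le_induction with
    | base => exact fun _ => ⟨A, hA, le_refl _⟩
    | succ m hm ih =>
      intro hle
      obtain ⟨B, hB, hE⟩ := ih (by omega)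
      obtain ⟨C, hC, hE'⟩ := SubcubeAux.step (by omega) B hB
      exact ⟨C, hC, hE.trans hE'⟩
  obtain ⟨B, hB, hE⟩ := key n' h1.le h2
  exact ⟨B, hB, hE⟩
end

section
/- Let A_1, ..., A_n be subsets of an m-element set X whose intersection graph contains no clique of size r+1. Then n ≤ r·m (assuming each A_i is nonempty), and the number of intersecting pairs is at most both the Turán number t_r(n) and binom(r,2)·m. -/
open Finset

/-- If `A₁,…,A_n` are nonempty subsets of an `m`-set whose intersection graph has no
clique of size `r+1`, then `n ≤ r·m` and the number of intersecting pairs is at most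
both the Turán number `t_r(n)` and `C(r,2)·m`. -/
theorem clique_free_intersection_bounds {X : Type*} [Fintype X] {m n r : ℕ}
    (hm : Fintype.card X = m) (A : Fin n → Set X)
    (hne : ∀ i, (A i).Nonempty)
    (hfree : ¬ ∃ s : Finset (Fin n), s.card = r + 1 ∧
      ∀ i ∈ s, ∀ j ∈ s, i ≠ j → (A i ∩ A j).Nonempty) :
    n ≤ r * m ∧
    {p : Fin n × Fin n | p.1 < p.2 ∧ (A p.1 ∩ A p.2).Nonempty}.ncard
      ≤ (SimpleGraph.turanGraph n r).edgeSet.ncard ∧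
    {p : Fin n × Fin n | p.1 < p.2 ∧ (A p.1 ∩ A p.2).Nonempty}.ncard
      ≤ Nat.choose r 2 * m := by
  classical
  rcases Nat.eq_zero_or_pos r with hr | hr
  · subst hr
    have hn : n = 0 := by
      by_contra h
      exact hfree ⟨{⟨0, Nat.pos_of_ne_zero h⟩}, by simp, by simp⟩
    subst hn
    have hP : {p : Fin 0 × Fin 0 | p.1 < p.2 ∧ (A p.1 ∩ A p.2).Nonempty} = ∅ := by
      ext p; exact p.1.elim0
    simp [hP]
  -- the sets of indices containing a point
  set S : X → Finset (Fin n) := fun x => univ.filter (fun i => x ∈ A i) with hSdef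
  have hS : ∀ x, (S x).card ≤ r := by
    intro x
    by_contra h
    push_neg at h
    obtain ⟨t, hts, htc⟩ := Finset.exists_subset_card_eq h
    refine hfree ⟨t, htc, fun i hi j hj hij => ⟨x, ?_, ?_⟩⟩
    · have := hts hi; simp [hSdef] at this; exact this
    · have := hts hj; simp [hSdef] at this; exact this
  constructor
  · -- n ≤ r * m
    set f : Fin n → X := fun i => (hne i).choose with hfdef
    have hf : ∀ i, f i ∈ A i := fun i => (hne i).choose_spec
    have h1 : (univ : Finset (Fin n)).card =
        ∑ x ∈ (univ : Finset X), (univ.filter (fun i => f i = x)).card :=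
      Finset.card_eq_sum_card_fiberwise (fun i _ => mem_univ _)
    have h2 : ∀ x ∈ (univ : Finset X), (univ.filter (fun i => f i = x)).card ≤ r := by
      intro x _
      refine le_trans (Finset.card_le_card ?_) (hS x)
      intro i hi
      simp only [mem_filter, mem_univ, true_and] at hi ⊢
      simp only [hSdef, mem_filter, mem_univ, true_and]
      rw [← hi]; exact hf i
    calc n = (univ : Finset (Fin n)).card := by simp
      _ = _ := h1
      _ ≤ (univ : Finset X).card * r := by
          simpa using Finset.sum_le_card_nsmul _ _ r h2
      _ = r * m := by rw [Finset.card_univ, hm, Nat.mul_comm]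
  -- the set of pairs as a finset
  set F : Finset (Fin n × Fin n) :=
    univ.filter (fun p => p.1 < p.2 ∧ (A p.1 ∩ A p.2).Nonempty) with hFdef
  have hPF : {p : Fin n × Fin n | p.1 < p.2 ∧ (A p.1 ∩ A p.2).Nonempty} = ↑F := by
    ext p; simp [hFdef]
  rw [hPF, Set.ncard_coe_finset]
  constructor
  · -- Turán bound
    set G : SimpleGraph (Fin n) := SimpleGraph.fromRel (fun i j => (A i ∩ A j).Nonempty)
      with hGdef
    have hadj : ∀ i j, G.Adj i j ↔ i ≠ j ∧ (A i ∩ A j).Nonempty := by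
      intro i j
      simp only [hGdef, SimpleGraph.fromRel_adj]
      constructor
      · rintro ⟨hij, h | h⟩
        · exact ⟨hij, h⟩
        · exact ⟨hij, by rwa [Set.inter_comm]⟩
      · rintro ⟨hij, h⟩; exact ⟨hij, Or.inl h⟩
    have hcf : G.CliqueFree (r + 1) := by
      intro s hs
      refine hfree ⟨s, hs.2, fun i hi j hj hij => ?_⟩
      exact ((hadj i j).1 (hs.1 hi hj hij)).2
    have hcard : F.card = G.edgeFinset.card := by
      refine Finset.card_bij (fun p _ => s(p.1, p.2)) ?_ ?_ ?_
      · intro p hp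
        simp only [hFdef, mem_filter, mem_univ, true_and] at hp
        rw [SimpleGraph.mem_edgeFinset, SimpleGraph.mem_edgeSet, hadj]
        exact ⟨hp.1.ne, hp.2⟩
      · intro p hp q hq h
        simp only [hFdef, mem_filter, mem_univ, true_and] at hp hq
        rw [Sym2.eq_iff] at h
        rcases h with ⟨h1, h2⟩ | ⟨h1, h2⟩
        · exact Prod.ext h1 h2
        · exfalso
          have a := congrArg Fin.val h1; have b := congrArg Fin.val h2
          have c := Fin.lt_def.1 hp.1; have d := Fin.lt_def.1 hq.1
          omega
      · intro e he
        induction e with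
        | _ i j =>
          rw [SimpleGraph.mem_edgeFinset, SimpleGraph.mem_edgeSet, hadj] at he
          rcases lt_or_gt_of_ne he.1 with h | h
          · exact ⟨(i, j), by simp [hFdef, h, he.2], rfl⟩
          · exact ⟨(j, i), by simp [hFdef, h, Set.inter_comm (A j) (A i) ▸ he.2],
              Sym2.eq_swap⟩
    rw [hcard, Set.ncard_eq_toFinset_card']
    have := (SimpleGraph.isTuranMaximal_turanGraph (n := n) hr).2 hcf
    convert this using 2
    ext e; simp
  · -- C(r,2) * m bound
    set w : Fin n × Fin n → X := fun p =>
      if h : (A p.1 ∩ A p.2).Nonempty then h.choose else (hne p.1).choose with hwdef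
    have hw : ∀ p ∈ F, w p ∈ A p.1 ∩ A p.2 := by
      intro p hp
      simp only [hFdef, mem_filter, mem_univ, true_and] at hp
      simp only [hwdef, dif_pos hp.2]
      exact hp.2.choose_spec
    have h1 : F.card = ∑ x ∈ (univ : Finset X), (F.filter (fun p => w p = x)).card :=
      Finset.card_eq_sum_card_fiberwise (fun p _ => mem_univ _)
    have h2 : ∀ x ∈ (univ : Finset X), (F.filter (fun p => w p = x)).card ≤ r.choose 2 := by
      intro x _
      have hinj : (F.filter (fun p => w p = x)).card ≤ ((S x).powersetCard 2).card := by
        refine Finset.card_le_card_of_injOn (fun p => {p.1, p.2}) ?_ ?_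
        · intro p hp
          simp only [mem_coe, mem_filter] at hp
          obtain ⟨hpF, hpx⟩ := hp
          have hlt : p.1 < p.2 := by
            simp only [hFdef, mem_filter, mem_univ, true_and] at hpF; exact hpF.1
          have hmem := hw p hpF
          rw [hpx] at hmem
          rw [Finset.mem_coe, Finset.mem_powersetCard]
          constructor
          · intro i hi
            simp only [mem_insert, mem_singleton] at hi
            simp only [hSdef, mem_filter, mem_univ, true_and]
            rcases hi with rfl | rfl
            · exact hmem.1
            · exact hmem.2
          · rw [Finset.card_insert_of_notMem (by simp [hlt.ne]), Finset.card_singleton]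
        · intro p hp q hq h
          simp only [coe_filter, Set.mem_setOf_eq] at hp hq
          have hp1 : p.1 < p.2 := by
            have := hp.1; simp only [hFdef, mem_filter, mem_univ, true_and] at this
            exact this.1
          have hq1 : q.1 < q.2 := by
            have := hq.1; simp only [hFdef, mem_filter, mem_univ, true_and] at this
            exact this.1
          have h' : ({p.1, p.2} : Finset (Fin n)) = {q.1, q.2} := h
          have h1' : p.1 ∈ ({q.1, q.2} : Finset (Fin n)) := h' ▸ (by simp)
          have h2' : p.2 ∈ ({q.1, q.2} : Finset (Fin n)) := h' ▸ (by simp)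
          simp only [mem_insert, mem_singleton] at h1' h2'
          rcases h1' with e1 | e1 <;> rcases h2' with e2 | e2 <;>
            first
            | exact Prod.ext e1 e2
            | (exfalso
               have a := congrArg Fin.val e1; have b := congrArg Fin.val e2
               have c := Fin.lt_def.1 hp1; have d := Fin.lt_def.1 hq1
               omega)
      calc (F.filter (fun p => w p = x)).card ≤ ((S x).powersetCard 2).card := hinj
        _ = (S x).card.choose 2 := Finset.card_powersetCard 2 (S x)
        _ ≤ r.choose 2 := Nat.choose_le_choose 2 (hS x)
    calc F.card = _ := h1
      _ ≤ (univ : Finset X).card * r.choose 2 := by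
          simpa using Finset.sum_le_card_nsmul _ _ (r.choose 2) h2
      _ = r.choose 2 * m := by rw [Finset.card_univ, hm, Nat.mul_comm]
end

section
/- Let q be a prime power, m = q^2, and r ≤ q + 1. Then there exist r·q subsets of an m-element set, each of size q, such that any two of them intersect in at most one point, every element is in exactly r of them, and their intersection graph is the complete r-partite graph with parts of size q (i.e., two sets intersect iff they lie in different parts). Consequently this graph has binom(r,2)·q^2 = binom(r,2)·m edges, matching the upper bound min{t_r(rq), binom(r,2)m}. -/
open Function Set

section Lines
variable {F : Type*} [Field F]

/-- affine lines in `F × F` with slope in `Option F` (`none` = vertical). -/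
def lline (u : Option F) (c : F) : Set (F × F) :=
  match u with
  | none => {z | z.1 = c}
  | some s => {z | z.2 = s * z.1 + c}

def llinePt (u : Option F) (c : F) (t : F) : F × F :=
  match u with
  | none => (c, t)
  | some s => (t, s * t + c)

def icept (u : Option F) (z : F × F) : F :=
  match u with
  | none => z.1
  | some s => z.2 - s * z.1

lemma mem_lline_iff {u : Option F} {c : F} {z : F × F} :
    z ∈ lline u c ↔ icept u z = c := by
  cases u with
  | none => rfl
  | some s =>
    simp only [lline, icept, Set.mem_setOf_eq]
    constructor
    · intro h; rw [h]; ring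
    · intro h; rw [← h]; ring

lemma lline_eq_range (u : Option F) (c : F) :
    lline u c = Set.range (llinePt u c) := by
  cases u with
  | none =>
    ext z
    simp only [lline, Set.mem_setOf_eq, Set.mem_range, llinePt]
    constructor
    · intro h; exact ⟨z.2, by rw [← h]⟩
    · rintro ⟨t, rfl⟩; rfl
  | some s =>
    ext z
    simp only [lline, Set.mem_setOf_eq, Set.mem_range, llinePt]
    constructor
    · intro h; exact ⟨z.1, by rw [← h]⟩
    · rintro ⟨t, rfl⟩; rfl

lemma llinePt_injective (u : Option F) (c : F) : Injective (llinePt u c) := by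
  cases u with
  | none => intro a b h; exact congrArg Prod.snd h
  | some s => intro a b h; exact congrArg Prod.fst h

lemma lline_inter_singleton {u v : Option F} (huv : u ≠ v) (c d : F) :
    ∃ z, lline u c ∩ lline v d = {z} := by
  match u, v with
  | none, none => exact absurd rfl huv
  | none, some s =>
    refine ⟨(c, s * c + d), ?_⟩
    ext z
    simp only [lline, Set.mem_inter_iff, Set.mem_setOf_eq, Set.mem_singleton_iff]
    constructor
    · rintro ⟨h1, h2⟩; exact Prod.ext h1 (by rw [h2, h1])
    · rintro rfl; exact ⟨rfl, rfl⟩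
  | some s, none =>
    refine ⟨(d, s * d + c), ?_⟩
    ext z
    simp only [lline, Set.mem_inter_iff, Set.mem_setOf_eq, Set.mem_singleton_iff]
    constructor
    · rintro ⟨h1, h2⟩; exact Prod.ext h2 (by rw [h1, h2])
    · rintro rfl; exact ⟨rfl, rfl⟩
  | some s, some t =>
    have hst : s - t ≠ 0 := sub_ne_zero.2 (by rintro rfl; exact huv rfl)
    refine ⟨((d - c) / (s - t), s * ((d - c) / (s - t)) + c), ?_⟩
    ext z
    simp only [lline, Set.mem_inter_iff, Set.mem_setOf_eq, Set.mem_singleton_iff]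
    constructor
    · rintro ⟨h1, h2⟩
      have hx : z.1 = (d - c) / (s - t) := by
        field_simp
        linear_combination h2 - h1
      exact Prod.ext hx (by rw [h1, hx])
    · rintro rfl
      refine ⟨rfl, ?_⟩
      simp only
      field_simp
      ring

lemma lline_inter_same {u : Option F} {c d : F} (hcd : c ≠ d) :
    lline u c ∩ lline u d = (∅ : Set (F × F)) := by
  ext z
  simp only [Set.mem_inter_iff, mem_lline_iff, Set.mem_empty_iff_false, iff_false]
  rintro ⟨h1, h2⟩
  exact hcd (h1 ▸ h2 ▸ rfl)
end Lines

lemma count_pairs (r q : ℕ) :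
    {pp : (Fin r × Fin q) × (Fin r × Fin q) | pp.1.1 ≠ pp.2.1}.ncard
      = (r * r - r) * (q * q) := by
  classical
  rw [← Nat.card_coe_set_eq]
  have e : {pp : (Fin r × Fin q) × (Fin r × Fin q) | pp.1.1 ≠ pp.2.1} ≃
      {ij : Fin r × Fin r // ij.1 ≠ ij.2} × (Fin q × Fin q) :=
    { toFun := fun pp => (⟨(pp.1.1.1, pp.1.2.1), pp.2⟩, (pp.1.1.2, pp.1.2.2))
      invFun := fun x => ⟨((x.1.1.1, x.2.1), (x.1.1.2, x.2.2)), x.1.2⟩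
      left_inv := fun pp => rfl
      right_inv := fun x => rfl }
  rw [Nat.card_congr e, Nat.card_prod]
  have h1 : Nat.card {ij : Fin r × Fin r // ij.1 ≠ ij.2} = r * r - r := by
    rw [Nat.card_eq_fintype_card, Fintype.card_subtype]
    have : (Finset.univ.filter fun ij : Fin r × Fin r => ij.1 ≠ ij.2)
        = Finset.univ.offDiag := by
      ext x; simp [Finset.mem_offDiag]
    rw [this, Finset.offDiag_card]
    simp [Finset.card_univ]
  rw [h1]
  simp [Nat.card_eq_fintype_card]

lemma two_mul_choose_two (r : ℕ) : 2 * Nat.choose r 2 = r * r - r := by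
  cases r with
  | zero => simp
  | succ s =>
    rw [Nat.choose_two_right]
    have hdvd : 2 ∣ (s + 1) * s := by
      have h := Nat.even_mul_succ_self s
      rw [Nat.mul_comm] at h
      exact h.two_dvd
    simp only [Nat.add_sub_cancel]
    rw [Nat.mul_div_cancel' hdvd]
    have h2 : (s + 1) * (s + 1) = (s + 1) * s + (s + 1) := Nat.mul_succ _ _
    omega

/-- Latin-square construction: for a prime power `q`, `m = q²` and `r ≤ q+1`, there are
`r·q` subsets of an `m`-set, each of size `q`, pairwise intersecting in at most one
point, with every element in exactly `r` of them, whose intersection graph is the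
complete `r`-partite graph with parts of size `q`; in particular it has `C(r,2)·m`
edges (i.e. `2·C(r,2)·m` ordered intersecting pairs). -/
theorem latin_square_construction {q m r : ℕ} (hq : IsPrimePow q)
    (hm : m = q ^ 2) (hr : r ≤ q + 1)
    {X : Type*} [Fintype X] (hX : Fintype.card X = m) :
    ∃ A : Fin r × Fin q → Set X,
      (∀ p, (A p).ncard = q) ∧
      (∀ p p', p ≠ p' → (A p ∩ A p').ncard ≤ 1) ∧
      (∀ x : X, {p : Fin r × Fin q | x ∈ A p}.ncard = r) ∧
      (∀ (i j : Fin r) (a b : Fin q),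
        ((A (i, a) ∩ A (j, b)).Nonempty ↔ (i ≠ j ∨ a = b))) ∧
      {pp : (Fin r × Fin q) × (Fin r × Fin q) |
          pp.1 ≠ pp.2 ∧ (A pp.1 ∩ A pp.2).Nonempty}.ncard
        = 2 * (Nat.choose r 2 * m) := by
  classical
  obtain ⟨p, k, hp, hk, hpk⟩ := hq
  haveI : Fact p.Prime := ⟨Nat.prime_iff.mpr hp⟩
  haveI : Fintype (GaloisField p k) := Fintype.ofFinite _
  have hF : Fintype.card (GaloisField p k) = q := by
    rw [← Nat.card_eq_fintype_card, GaloisField.card p k hk.ne']; exact hpk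
  obtain ⟨e⟩ : Nonempty (X ≃ GaloisField p k × GaloisField p k) :=
    ⟨Fintype.equivOfCardEq (by rw [hX, hm, Fintype.card_prod, hF, sq])⟩
  obtain ⟨g⟩ : Nonempty (Fin q ≃ GaloisField p k) :=
    ⟨Fintype.equivOfCardEq (by simp [hF])⟩
  obtain ⟨f⟩ : Nonempty (Fin r ↪ Option (GaloisField p k)) :=
    Function.Embedding.nonempty_of_card_le (by simp [hF, hr])
  set A : Fin r × Fin q → Set X := fun p => e ⁻¹' lline (f p.1) (g p.2) with hAdef
  -- basic facts
  have hpre : ∀ s : Set (GaloisField p k × GaloisField p k), (e ⁻¹' s).ncard = s.ncard := by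
    intro s
    have h : e ⁻¹' s = e.symm '' s := by
      rw [Equiv.image_eq_preimage_symm]; simp
    rw [h, Set.ncard_image_of_injective _ e.symm.injective]
  have hline : ∀ (u : Option (GaloisField p k)) (c : GaloisField p k), (lline u c).ncard = q := by
    intro u c
    rw [lline_eq_range, ← Nat.card_coe_set_eq,
      Nat.card_range_of_injective (llinePt_injective u c),
      Nat.card_eq_fintype_card, hF]
  have hlnem : ∀ (u : Option (GaloisField p k)) (c : GaloisField p k), (lline u c).Nonempty := by
    intro u c
    exact ⟨llinePt u c 0, by rw [lline_eq_range]; exact Set.mem_range_self 0⟩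
  have hpre_ne : ∀ s : Set (GaloisField p k × GaloisField p k), s.Nonempty → (e ⁻¹' s).Nonempty := by
    rintro s ⟨z, hz⟩
    exact ⟨e.symm z, by simp [hz]⟩
  have hinter : ∀ p p' : Fin r × Fin q,
      A p ∩ A p' = e ⁻¹' (lline (f p.1) (g p.2) ∩ lline (f p'.1) (g p'.2)) := by
    intro p p'
    rw [hAdef, Set.preimage_inter]
  -- the iff
  have hiff : ∀ (i j : Fin r) (a b : Fin q),
      ((A (i, a) ∩ A (j, b)).Nonempty ↔ (i ≠ j ∨ a = b)) := by
    intro i j a b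
    rw [hinter (i, a) (j, b)]
    constructor
    · intro hne
      by_contra hcon
      push_neg at hcon
      obtain ⟨hij, hab⟩ := hcon
      subst hij
      have hgab : g a ≠ g b := fun h => hab (g.injective h)
      rw [lline_inter_same hgab] at hne
      simp at hne
    · have hsing : i ≠ j → (⇑e ⁻¹' (lline (f (i, a).1) (g (i, a).2) ∩
          lline (f (j, b).1) (g (j, b).2))).Nonempty := by
        intro hij
        have hf : f i ≠ f j := fun h => hij (f.injective h)
        obtain ⟨z, hz⟩ := lline_inter_singleton hf (g a) (g b)
        rw [hz]
        exact hpre_ne _ ⟨z, rfl⟩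
      rintro (hij | rfl)
      · exact hsing hij
      · by_cases hij : i = j
        · subst hij
          rw [Set.inter_self]
          exact hpre_ne _ (hlnem _ _)
        · exact hsing hij
  refine ⟨A, ?_, ?_, ?_, hiff, ?_⟩
  · intro p
    rw [hAdef]
    exact (hpre _).trans (hline _ _)
  · intro p p' hne
    by_cases h : p.1 = p'.1
    · have hab : p.2 ≠ p'.2 := fun h2 => hne (Prod.ext h h2)
      have hgab : g p.2 ≠ g p'.2 := fun hh => hab (g.injective hh)
      rw [hinter, h, lline_inter_same hgab]
      simp
    · have hf : f p.1 ≠ f p'.1 := fun hh => h (f.injective hh)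
      obtain ⟨z, hz⟩ := lline_inter_singleton hf (g p.2) (g p'.2)
      rw [hinter, hz]
      exact le_of_eq ((hpre _).trans (Set.ncard_singleton z))
  · intro x
    have hset : {p : Fin r × Fin q | x ∈ A p}
        = Set.range (fun i : Fin r => (i, g.symm (icept (f i) (e x)))) := by
      ext p
      simp only [hAdef, Set.mem_setOf_eq, Set.mem_preimage, mem_lline_iff,
        Set.mem_range]
      constructor
      · intro h
        refine ⟨p.1, Prod.ext rfl ?_⟩
        show g.symm (icept (f p.1) (e x)) = p.2
        rw [h, Equiv.symm_apply_apply]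
      · rintro ⟨i, rfl⟩
        simp
    rw [hset, ← Nat.card_coe_set_eq,
      Nat.card_range_of_injective (fun a b h => congrArg Prod.fst h),
      Nat.card_eq_fintype_card, Fintype.card_fin]
  · have hset : {pp : (Fin r × Fin q) × (Fin r × Fin q) |
        pp.1 ≠ pp.2 ∧ (A pp.1 ∩ A pp.2).Nonempty}
        = {pp : (Fin r × Fin q) × (Fin r × Fin q) | pp.1.1 ≠ pp.2.1} := by
      ext ⟨⟨i, a⟩, ⟨j, b⟩⟩
      simp only [Set.mem_setOf_eq]
      constructor
      · rintro ⟨hne, hnem⟩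
        rcases (hiff i j a b).1 hnem with hij | rfl
        · exact hij
        · exact fun h => hne (by rw [h])
      · intro hij
        exact ⟨fun h => hij (congrArg Prod.fst h), (hiff i j a b).2 (Or.inl hij)⟩
    rw [hset, count_pairs, hm, ← two_mul_choose_two, sq]
    ring
end

section
/- Every intersection graph of n subcubes of {0,1}^2 with n ≥ 2(k−1)+1 contains either a clique of size k or an independent set of size 3; together with the lower bound construction (k−1 copies each of two disjoint singleton subcubes) this shows R_2(k,3) = 2(k−1)+1 = 2k−1. -/
/-- The intersection graph of a family of subcubes contains a clique of size `k`. -/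
def cubesHaveClique {d n : ℕ} (A : Fin n → (Fin d → Option Bool)) (k : ℕ) : Prop :=
  ∃ s : Finset (Fin n), s.card = k ∧
    ∀ i ∈ s, ∀ j ∈ s, i ≠ j → (cubeSet (A i) ∩ cubeSet (A j)).Nonempty

/-- The intersection graph of a family of subcubes contains an independent set of size `l`. -/
def cubesHaveIndep {d n : ℕ} (A : Fin n → (Fin d → Option Bool)) (l : ℕ) : Prop :=
  ∃ s : Finset (Fin n), s.card = l ∧
    ∀ i ∈ s, ∀ j ∈ s, i ≠ j → cubeSet (A i) ∩ cubeSet (A j) = ∅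

/-- `Rd d k l`: the least `n` such that every intersection graph of `n` subcubes of
`{0,1}^d` contains a clique of size `k` or an independent set of size `l`. -/
noncomputable def Rd (d k l : ℕ) : ℕ :=
  sInf {n : ℕ | ∀ A : Fin n → (Fin d → Option Bool),
    cubesHaveClique A k ∨ cubesHaveIndep A l}

lemma cubeSet_sing {d : ℕ} {u : Fin d → Option Bool} {p : Fin d → Bool}
    (h : ∀ c, u c = some (p c)) : cubeSet u = {p} := by
  ext x
  simp only [cubeSet, Set.mem_setOf_eq, Set.mem_singleton_iff]
  constructor
  · intro hx; funext c; exact hx c (p c) (h c)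
  · rintro rfl i b hb; rw [h i] at hb; exact Option.some_inj.mp hb

lemma contains_of_none {u : Fin 2 → Option Bool} {c : Fin 2} (hc : u c = none)
    (q : Fin 2 → Bool) : q ∈ cubeSet u ∨ (fun i => !q i) ∈ cubeSet u := by
  have key : ∀ u : Fin 2 → Option Bool, ∀ q : Fin 2 → Bool, ∀ c : Fin 2, u c = none →
      ((∀ i b, u i = some b → q i = b) ∨ (∀ i b, u i = some b → (!q i) = b)) := by decide
  exact key u q c hc

lemma clique_of_point {n k : ℕ} (A : Fin n → (Fin 2 → Option Bool)) (p : Fin 2 → Bool)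
    (s : Finset (Fin n)) (hs : ∀ i ∈ s, p ∈ cubeSet (A i)) (hcard : k ≤ s.card) :
    cubesHaveClique A k := by
  obtain ⟨t, hts, htc⟩ := Finset.exists_subset_card_eq hcard
  exact ⟨t, htc, fun i hi j hj _ => ⟨p, hs i (hts hi), hs j (hts hj)⟩⟩

lemma clique_of_cover {n k : ℕ} (A : Fin n → (Fin 2 → Option Bool)) (P1 P2 : Fin 2 → Bool)
    (H : ∀ m, P1 ∈ cubeSet (A m) ∨ P2 ∈ cubeSet (A m)) (hn : 2 * (k - 1) + 1 ≤ n) :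
    cubesHaveClique A k := by
  classical
  set s1 := Finset.univ.filter (fun i => P1 ∈ cubeSet (A i)) with hs1
  set s2 := Finset.univ.filter (fun i => P2 ∈ cubeSet (A i)) with hs2
  have hcov : s1 ∪ s2 = Finset.univ := by
    ext m
    simp only [hs1, hs2, Finset.mem_union, Finset.mem_filter, Finset.mem_univ, true_and,
      iff_true]
    exact H m
  have hle : n ≤ s1.card + s2.card := by
    calc n = (Finset.univ : Finset (Fin n)).card := by simp
    _ = (s1 ∪ s2).card := by rw [hcov]
    _ ≤ _ := Finset.card_union_le _ _
  have hk' : k ≤ s1.card ∨ k ≤ s2.card := by omega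
  rcases hk' with h | h
  · exact clique_of_point A P1 s1 (fun i hi => (Finset.mem_filter.mp hi).2) h
  · exact clique_of_point A P2 s2 (fun i hi => (Finset.mem_filter.mp hi).2) h

lemma upper (k : ℕ) (A : Fin (2 * (k - 1) + 1) → (Fin 2 → Option Bool)) :
    cubesHaveClique A k ∨ cubesHaveIndep A 3 := by
  classical
  by_cases h3 : cubesHaveIndep A 3
  · exact Or.inr h3
  left
  by_cases hA : ∃ i, ∃ p1 : Fin 2 → Bool, ∃ j, ∃ p2 : Fin 2 → Bool,
      (∀ c, A i c = some (p1 c)) ∧ (∀ c, A j c = some (p2 c)) ∧ p1 ≠ p2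
  · obtain ⟨i, p1, j, p2, hi, hj, hne⟩ := hA
    have e1 : cubeSet (A i) = {p1} := cubeSet_sing hi
    have e2 : cubeSet (A j) = {p2} := cubeSet_sing hj
    have H : ∀ m, p1 ∈ cubeSet (A m) ∨ p2 ∈ cubeSet (A m) := by
      intro m
      by_contra hm
      push_neg at hm
      apply h3
      have hij : i ≠ j := by
        intro h; rw [h] at e1; rw [e1] at e2
        exact hne (Set.singleton_eq_singleton_iff.mp e2)
      have hmi : m ≠ i := by
        intro h; apply hm.1; rw [h, e1]; rfl
      have hmj : m ≠ j := by
        intro h; apply hm.2; rw [h, e2]; rfl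
      have dij : cubeSet (A i) ∩ cubeSet (A j) = ∅ := by
        rw [e1, e2, Set.singleton_inter_eq_empty]
        simpa using hne
      have dim : cubeSet (A i) ∩ cubeSet (A m) = ∅ := by
        rw [e1, Set.singleton_inter_eq_empty]; exact hm.1
      have djm : cubeSet (A j) ∩ cubeSet (A m) = ∅ := by
        rw [e2, Set.singleton_inter_eq_empty]; exact hm.2
      have dji : cubeSet (A j) ∩ cubeSet (A i) = ∅ := by rw [Set.inter_comm]; exact dij
      have dmi : cubeSet (A m) ∩ cubeSet (A i) = ∅ := by rw [Set.inter_comm]; exact dim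
      have dmj : cubeSet (A m) ∩ cubeSet (A j) = ∅ := by rw [Set.inter_comm]; exact djm
      refine ⟨{i, j, m}, ?_, ?_⟩
      · rw [Finset.card_insert_of_notMem (by simp [hij, hmi.symm]),
          Finset.card_insert_of_notMem (by simp [hmj.symm]), Finset.card_singleton]
      · intro a ha b hb hab
        simp only [Finset.mem_insert, Finset.mem_singleton] at ha hb
        rcases ha with rfl | rfl | rfl <;> rcases hb with rfl | rfl | rfl <;>
          first
            | exact absurd rfl hab
            | assumption
    exact clique_of_cover A p1 p2 H le_rfl
  · push_neg at hA
    have hnone : ∀ m, (¬∃ p : Fin 2 → Bool, ∀ c, A m c = some (p c)) → ∃ c, A m c = none := by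
      intro m hm
      by_contra hn
      push_neg at hn
      apply hm
      refine ⟨fun c => (A m c).getD false, fun c => ?_⟩
      cases h : A m c with
      | none => exact absurd h (hn c)
      | some b => simp [h]
    by_cases hS : ∃ i, ∃ p : Fin 2 → Bool, ∀ c, A i c = some (p c)
    · obtain ⟨i0, P, hP⟩ := hS
      have H : ∀ m, P ∈ cubeSet (A m) ∨ (fun c => !P c) ∈ cubeSet (A m) := by
        intro m
        by_cases hms : ∃ p : Fin 2 → Bool, ∀ c, A m c = some (p c)
        · obtain ⟨p, hp⟩ := hms
          have hpP : p = P := hA m p i0 P hp hP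
          left
          rw [cubeSet_sing hp, hpP]
          rfl
        · obtain ⟨c, hc⟩ := hnone m hms
          exact contains_of_none hc P
      exact clique_of_cover A P (fun c => !P c) H le_rfl
    · push_neg at hS
      have H : ∀ m, (fun _ : Fin 2 => false) ∈ cubeSet (A m) ∨
          (fun _ : Fin 2 => !false) ∈ cubeSet (A m) := by
        intro m
        obtain ⟨c, hc⟩ := hnone m (by push_neg; exact hS m)
        exact contains_of_none hc _
      exact clique_of_cover A _ _ H le_rfl

lemma lower (k m : ℕ) (hm : m ≤ 2 * (k - 1)) (hk : 1 ≤ k) :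
    ∃ A : Fin m → (Fin 2 → Option Bool), ¬cubesHaveClique A k ∧ ¬cubesHaveIndep A 3 := by
  classical
  refine ⟨fun i _ => some (decide (i.val % 2 = 1)), ?_, ?_⟩
  · rintro ⟨s, hcard, hcl⟩
    have hpar : ∀ i ∈ s, ∀ j ∈ s, i.val % 2 = j.val % 2 := by
      intro i hi j hj
      by_contra hne
      have hij : i ≠ j := fun h => hne (by rw [h])
      obtain ⟨x, hx1, hx2⟩ := hcl i hi j hj hij
      have e1 : cubeSet (fun _ : Fin 2 => some (decide (i.val % 2 = 1))) =
          {fun _ => decide (i.val % 2 = 1)} := cubeSet_sing (fun _ => rfl)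
      have e2 : cubeSet (fun _ : Fin 2 => some (decide (j.val % 2 = 1))) =
          {fun _ => decide (j.val % 2 = 1)} := cubeSet_sing (fun _ => rfl)
      rw [e1] at hx1
      rw [e2] at hx2
      have : decide (i.val % 2 = 1) = decide (j.val % 2 = 1) := by
        have := hx1.symm.trans hx2
        exact congrFun this 0
      rw [decide_eq_decide] at this
      omega
    have hinj : Set.InjOn (fun i : Fin m => i.val / 2) s := by
      intro i hi j hj hij
      have := hpar i hi j hj
      simp only at hij
      exact Fin.val_injective (by omega)
    have hmaps : ∀ i ∈ s, i.val / 2 ∈ Finset.range (k - 1) := by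
      intro i hi
      simp only [Finset.mem_range]
      have : i.val < m := i.isLt
      omega
    have := Finset.card_le_card_of_injOn _ hmaps hinj
    rw [hcard, Finset.card_range] at this
    omega
  · rintro ⟨s, hcard, hind⟩
    have : (Finset.range 2).card < s.card := by simp [hcard]
    obtain ⟨i, hi, j, hj, hij, hpar⟩ :=
      Finset.exists_ne_map_eq_of_card_lt_of_maps_to this
        (f := fun i : Fin m => i.val % 2)
        (fun a _ => Finset.mem_range.mpr (Nat.mod_lt _ (by norm_num)))
    have hd := hind i hi j hj hij
    have hmem : (fun _ : Fin 2 => decide (i.val % 2 = 1)) ∈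
        cubeSet (fun _ : Fin 2 => some (decide (i.val % 2 = 1))) ∩
        cubeSet (fun _ : Fin 2 => some (decide (j.val % 2 = 1))) := by
      constructor
      · intro c b hb
        show decide (i.val % 2 = 1) = b
        exact Option.some_inj.mp hb
      · intro c b hb
        show decide (i.val % 2 = 1) = b
        have heq : decide (i.val % 2 = 1) = decide (j.val % 2 = 1) := by
          rw [decide_eq_decide]; omega
        exact heq.trans (Option.some_inj.mp hb)
    rw [hd] at hmem
    exact hmem

/-- `R_2(k,3) = 2(k-1)+1`. -/
theorem Rd_two_k_three {k : ℕ} (hk : 1 ≤ k) : Rd 2 k 3 = 2 * (k - 1) + 1 := by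
  have hmem : (2 * (k - 1) + 1) ∈ {n : ℕ | ∀ A : Fin n → (Fin 2 → Option Bool),
      cubesHaveClique A k ∨ cubesHaveIndep A 3} := fun A => upper k A
  unfold Rd
  apply le_antisymm
  · exact Nat.sInf_le hmem
  · apply le_csInf ⟨_, hmem⟩
    intro n hn
    by_contra hlt
    push_neg at hlt
    have hn' : n ≤ 2 * (k - 1) := by omega
    obtain ⟨A, hA1, hA2⟩ := lower k n hn' hk
    rcases hn A with h | h
    · exact hA1 h
    · exact hA2 h
end

section
/- If there is a graph G' on d vertices with no clique of size x and no independent set of size l (i.e., R(x,l) > d), then there is a multiset of d·⌊k/x⌋ subcubes of {0,1}^d whose intersection graph contains no clique of size k and no independent set of size l; hence R_d(k,l) > d·⌊k/x⌋. -/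
open Classical in
/-- the subcube representing vertex `v` of `G` -/
noncomputable def gcube {d : ℕ} (G : SimpleGraph (Fin d)) (v : Fin d) : Fin d → Option Bool :=
  fun i => if i = v then some true else if G.Adj v i then none else some false

lemma cubeSet_nonempty {d : ℕ} (u : Fin d → Option Bool) : (cubeSet u).Nonempty := by
  refine ⟨fun i => (u i).getD false, fun i b h => ?_⟩
  simp [h]

lemma mem_gcube_pair {d : ℕ} (G : SimpleGraph (Fin d)) {v w : Fin d} (h : G.Adj v w) :
    (fun i => decide (i = v ∨ i = w)) ∈ cubeSet (gcube G v) := by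
  intro i b hb
  by_cases h1 : i = v
  · simp [gcube, h1] at hb
    subst hb h1
    simp
  · by_cases h2 : G.Adj v i
    · simp [gcube, h1, h2] at hb
    · simp [gcube, h1, h2] at hb
      subst hb
      simp only [decide_eq_false_iff_not]
      rintro (rfl | rfl)
      · exact h1 rfl
      · exact h2 h

lemma gcube_inter_nonempty {d : ℕ} (G : SimpleGraph (Fin d)) {v w : Fin d}
    (h : G.Adj v w ∨ v = w) : (cubeSet (gcube G v) ∩ cubeSet (gcube G w)).Nonempty := by
  rcases h with h | rfl
  · refine ⟨fun i => decide (i = v ∨ i = w), mem_gcube_pair G h, ?_⟩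
    have := mem_gcube_pair G h.symm
    intro i b hb
    have := this i b hb
    simpa [or_comm] using this
  · exact (cubeSet_nonempty _).mono (Set.subset_inter le_rfl le_rfl)

lemma gcube_inter_empty {d : ℕ} (G : SimpleGraph (Fin d)) {v w : Fin d}
    (hne : v ≠ w) (h : ¬ G.Adj v w) : cubeSet (gcube G v) ∩ cubeSet (gcube G w) = ∅ := by
  ext y
  simp only [Set.mem_inter_iff, Set.mem_empty_iff_false, iff_false, not_and]
  intro h1 h2
  have e1 : y v = true := h1 v true (by simp [gcube])
  have e2 : y v = false := h2 v false (by
    simp only [gcube]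
    rw [if_neg hne, if_neg (fun hadj : G.Adj w v => h hadj.symm)])
  rw [e1] at e2; exact Bool.noConfusion e2

/-- If there is a graph on `d` vertices with no clique of size `x` and no independent
set of size `l` (i.e. `R(x,l) > d`), then `R_d(k,l) > d·⌊k/x⌋`. -/
theorem Rd_lower_bound {d k l x : ℕ} (hk : 1 ≤ k)
    (G : SimpleGraph (Fin d))
    (hclique : G.CliqueFree x) (hindep : Gᶜ.CliqueFree l) :
    d * (k / x) < Rd d k l := by
  classical
  have hx : x ≠ 0 := by
    rintro rfl
    exact hclique ∅ ⟨by simp [SimpleGraph.IsClique], rfl⟩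
  have hl : l ≠ 0 := by
    rintro rfl
    exact hindep ∅ ⟨by simp [SimpleGraph.IsClique], rfl⟩
  set c := k / x with hc
  set f : Fin (d * c) → Fin d := fun j => ⟨j.val % d, Nat.mod_lt _ (by
    have h := j.isLt
    refine Nat.pos_of_ne_zero fun h0 => ?_
    subst h0
    simp at h)⟩ with hf
  set B : Fin (d * c) → (Fin d → Option Bool) := fun j => gcube G (f j) with hB
  -- B has no clique of size k
  have hBclique : ¬ cubesHaveClique B k := by
    rintro ⟨s, hcard, hs⟩
    have himg : (s.image f).card ≤ x - 1 := by
      by_contra hgt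
      push_neg at hgt
      obtain ⟨t, hts, htcard⟩ := Finset.exists_subset_card_eq (s := s.image f) (n := x) (by omega)
      refine hclique t ⟨?_, htcard⟩
      intro a ha b hb hab
      obtain ⟨i, hi, rfl⟩ := Finset.mem_image.1 (hts ha)
      obtain ⟨j, hj, rfl⟩ := Finset.mem_image.1 (hts hb)
      have hij : i ≠ j := fun h => hab (by rw [h])
      have hne := hs i hi j hj hij
      by_contra hadj
      simp only [hB] at hne
      rw [gcube_inter_empty G hab hadj] at hne
      exact Set.not_nonempty_empty hne
    have hfiber : ∀ a ∈ s.image f, (s.filter fun j => f j = a).card ≤ c := by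
      intro a _
      have hle : (s.filter fun j => f j = a).card ≤ (Finset.univ : Finset (Fin c)).card := by
        apply Finset.card_le_card_of_injOn (fun j => (⟨j.val / d, by
          have hd : 0 < d := (f j).pos
          refine (Nat.div_lt_iff_lt_mul hd).2 ?_
          exact lt_of_lt_of_eq j.isLt (Nat.mul_comm d c)⟩ : Fin c)) (fun _ _ => Finset.mem_univ _) ?_
        intro j1 hj1 j2 hj2 heq
        simp only [Finset.mem_coe, Finset.mem_filter] at hj1 hj2
        have hmod : j1.val % d = j2.val % d := congrArg Fin.val (hj1.2.trans hj2.2.symm)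
        have hdiv : j1.val / d = j2.val / d := congrArg Fin.val heq
        have e1 := Nat.div_add_mod j1.val d
        have e2 := Nat.div_add_mod j2.val d
        refine Fin.ext ?_
        rw [← e1, ← e2, hmod, hdiv]
      simpa using hle
    have hub := Finset.card_le_mul_card_image s c hfiber
    rw [hcard] at hub
    rcases Nat.eq_zero_or_pos c with h0 | hpos
    · have hsle : s.card ≤ d * c := le_trans (Finset.card_le_univ s) (by simp)
      have hzero : d * c = 0 := by rw [h0, Nat.mul_zero]
      omega
    · have hx1 : x - 1 + 1 = x := Nat.succ_pred_eq_of_pos (Nat.pos_of_ne_zero hx)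
      have h1 : k ≤ c * (x - 1) := le_trans hub (Nat.mul_le_mul_left c himg)
      have h2 : c * x = c * (x - 1) + c := by
        conv_lhs => rw [show x = x - 1 + 1 from by omega]
        rw [Nat.mul_add, Nat.mul_one]
      have h3 : c * x ≤ k := by rw [hc]; exact Nat.div_mul_le_self k x
      omega
  -- B has no independent set of size l
  have hBindep : ¬ cubesHaveIndep B l := by
    rintro ⟨s, hcard, hs⟩
    have hinj : Set.InjOn f s := by
      intro i hi j hj heq
      by_contra hne
      have hemp := hs i hi j hj hne
      simp only [hB, heq] at hemp
      have := gcube_inter_nonempty G (Or.inr rfl) (v := f j) (w := f j)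
      rw [hemp] at this
      exact Set.not_nonempty_empty this
    refine hindep (s.image f) ⟨?_, by rw [Finset.card_image_of_injOn hinj, hcard]⟩
    intro a ha b hb hab
    obtain ⟨i, hi, rfl⟩ := Finset.mem_image.1 (Finset.mem_coe.1 ha)
    obtain ⟨j, hj, rfl⟩ := Finset.mem_image.1 (Finset.mem_coe.1 hb)
    have hne : i ≠ j := fun h => hab (by rw [h])
    have hemp := hs i hi j hj hne
    refine (SimpleGraph.compl_adj G _ _).2 ⟨hab, fun hadj => ?_⟩
    have := gcube_inter_nonempty G (Or.inl hadj)
    simp only [hB] at hemp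
    rw [hemp] at this
    exact Set.not_nonempty_empty this
  set S := {n : ℕ | ∀ A : Fin n → (Fin d → Option Bool),
    cubesHaveClique A k ∨ cubesHaveIndep A l} with hS
  have hSne : S.Nonempty := by
    refine ⟨3 ^ d * (k - 1) + 1, fun A => ?_⟩
    left
    have hcard3 : Fintype.card (Fin d → Option Bool) * (k - 1) <
        Fintype.card (Fin (3 ^ d * (k - 1) + 1)) := by
      simp [Fintype.card_fun]
    obtain ⟨u, hu⟩ := Fintype.exists_lt_card_fiber_of_mul_lt_card (f := A) hcard3
    obtain ⟨t, hts, htcard⟩ := Finset.exists_subset_card_eq (s := Finset.filter (fun x => A x = u) Finset.univ) (n := k) (by omega)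
    refine ⟨t, htcard, fun i hi j hj hij => ?_⟩
    have hi' := (Finset.mem_filter.1 (hts hi)).2
    have hj' := (Finset.mem_filter.1 (hts hj)).2
    rw [hi', hj']
    exact (cubeSet_nonempty u).mono (Set.subset_inter le_rfl le_rfl)
  rw [Rd, ← hS]
  refine Nat.lt_of_lt_of_le (Nat.lt_succ_self _) (le_csInf hSne ?_)
  intro n hn
  by_contra hlt
  push_neg at hlt
  have hnm : n ≤ d * c := by omega
  rcases hn (fun j => B (Fin.castLE hnm j)) with ⟨s, hcard, hs⟩ | ⟨s, hcard, hs⟩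
  · refine hBclique ⟨s.map (Fin.castLEEmb hnm), by simp [hcard], ?_⟩
    intro i hi j hj hij
    simp only [Finset.mem_map, Fin.castLEEmb_apply] at hi hj
    obtain ⟨i', hi', rfl⟩ := hi
    obtain ⟨j', hj', rfl⟩ := hj
    exact hs i' hi' j' hj' (fun h => hij (by rw [h]))
  · refine hBindep ⟨s.map (Fin.castLEEmb hnm), by simp [hcard], ?_⟩
    intro i hi j hj hij
    simp only [Finset.mem_map, Fin.castLEEmb_apply] at hi hj
    obtain ⟨i', hi', rfl⟩ := hi
    obtain ⟨j', hj', rfl⟩ := hj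
    exact hs i' hi' j' hj' (fun h => hij (by rw [h]))
end

section
/- For all d ≥ 1, k ≥ 2 and l ≥ 2, R_d(k,l) ≤ 2·d^{l-2}·k. -/
/-- Two cubes are compatible: no coordinate conflict. -/
def compatC {d : ℕ} (u v : Fin d → Option Bool) : Prop :=
  ∀ i b b', u i = some b → v i = some b' → b = b'

lemma compatC_refl {d : ℕ} (u : Fin d → Option Bool) : compatC u u := by
  intro i b b' h h'; rw [h] at h'; exact Option.some_injective _ h'

lemma compatC_symm {d : ℕ} {u v : Fin d → Option Bool} (h : compatC u v) : compatC v u := by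
  intro i b b' h1 h2; exact (h i b' b h2 h1).symm

lemma inter_nonempty_iff {d : ℕ} (u v : Fin d → Option Bool) :
    (cubeSet u ∩ cubeSet v).Nonempty ↔ compatC u v := by
  constructor
  · rintro ⟨x, hxu, hxv⟩ i b b' hu hv
    rw [← hxu i b hu, ← hxv i b' hv]
  · intro h
    refine ⟨fun i => (u i).getD ((v i).getD false), ?_, ?_⟩
    · intro i b hb; simp [hb]
    · intro i b hb
      cases hui : u i with
      | some b' => simp only [hui, Option.getD_some]; exact h i b' b hui hb
      | none => simp [hui, hb]

lemma inter_empty_iff {d : ℕ} (u v : Fin d → Option Bool) :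
    cubeSet u ∩ cubeSet v = ∅ ↔ ¬ compatC u v := by
  rw [← inter_nonempty_iff, Set.not_nonempty_iff_eq_empty]

/-- meet of two cubes, taking `u`'s value where fixed. -/
def meetC {d : ℕ} (u v : Fin d → Option Bool) : Fin d → Option Bool :=
  fun i => match u i with | some b => some b | none => v i

/-- conflicts between `u` and `v` occur only within `F`. -/
def confIn {d : ℕ} (F : Finset (Fin d)) (u v : Fin d → Option Bool) : Prop :=
  ∀ i b b', u i = some b → v i = some b' → b ≠ b' → i ∈ F

lemma compat_meet_iff {d : ℕ} {p u v : Fin d → Option Bool}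
    (hpu : compatC p u) (hpv : compatC p v) :
    compatC (meetC p u) (meetC p v) ↔ compatC u v := by
  constructor
  · intro h i b b' hu hv
    cases hpi : p i with
    | some a => exact (hpu i a b hpi hu).symm.trans (hpv i a b' hpi hv)
    | none =>
      refine h i b b' ?_ ?_ <;> simp only [meetC, hpi] <;> assumption
  · intro h i b b' hu hv
    simp only [meetC] at hu hv
    cases hpi : p i with
    | some a => rw [hpi] at hu hv; simp only [Option.some.injEq] at hu hv; rw [← hu, ← hv]
    | none => rw [hpi] at hu hv; exact h i b b' hu hv



lemma clique_of_pairwise {d n k : ℕ} (A : Fin n → (Fin d → Option Bool))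
    (s : Finset (Fin n)) (hcard : k ≤ s.card)
    (h : ∀ i ∈ s, ∀ j ∈ s, i ≠ j → compatC (A i) (A j)) : cubesHaveClique A k := by
  obtain ⟨t, hts, htc⟩ := Finset.exists_subset_card_eq hcard
  exact ⟨t, htc, fun i hi j hj hij =>
    (inter_nonempty_iff _ _).2 (h i (hts hi) j (hts hj) hij)⟩

lemma geom_sum_le {m p : ℕ} (hm : 1 ≤ m) :
    ∑ i ∈ Finset.range (p + 1), (m - 1) ^ i ≤ m ^ p := by
  induction p with
  | zero => simp
  | succ p ih =>
    rw [Finset.sum_range_succ]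
    have h1 : (m - 1) ^ (p + 1) ≤ m ^ p * (m - 1) := by
      rw [pow_succ]
      exact Nat.mul_le_mul_right _ (Nat.pow_le_pow_left (Nat.sub_le m 1) p)
    have h2 : m ^ p + m ^ p * (m - 1) = m ^ (p + 1) := by
      rw [pow_succ]
      cases m with
      | zero => omega
      | succ m => simp [Nat.succ_sub_one]; ring
    omega

/-- Base case: conflicts confined to at most one coordinate force large cliques. -/
lemma base_one {d k n : ℕ} (hd : 1 ≤ d) (c : Fin d) (A : Fin n → (Fin d → Option Bool))
    (hconf : ∀ j j' : Fin n, confIn {c} (A j) (A j')) (hn : 2 * k ≤ n) :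
    cubesHaveClique A k := by
  classical
  set G1 : Finset (Fin n) := Finset.univ.filter (fun j => A j c = some true) with hG1
  set G0 : Finset (Fin n) := Finset.univ.filter (fun j => ¬ A j c = some true) with hG0
  have hcover : G0.card + G1.card = n := by
    rw [hG0, hG1]
    have := Finset.card_filter_add_card_filter_not
      (s := (Finset.univ : Finset (Fin n))) (p := fun j => A j c = some true)
    simp only [Finset.card_univ, Fintype.card_fin] at this
    omega
  have key : ∀ (G : Finset (Fin n)) (b : Bool),
      (∀ j ∈ G, ∀ b' : Bool, A j c = some b' → b' = b) →
      ∀ i ∈ G, ∀ j ∈ G, i ≠ j → compatC (A i) (A j) := by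
    intro G b hG i hi j hj hij p x y hx hy
    by_contra hne
    have hp : p ∈ ({c} : Finset (Fin d)) := hconf i j p x y hx hy hne
    rw [Finset.mem_singleton] at hp
    subst hp
    rw [hG i hi x hx, hG j hj y hy] at hne
    exact hne rfl
  rcases Nat.le_or_le (G0.card) (G1.card) with hle | hle
  · refine clique_of_pairwise A G1 (by omega) (key G1 true ?_)
    intro j hj b' hb'
    rw [hG1, Finset.mem_filter] at hj
    rw [hj.2] at hb'
    exact (Option.some_injective _ hb'.symm)
  · refine clique_of_pairwise A G0 (by omega) (key G0 false ?_)
    intro j hj b' hb'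
    rw [hG0, Finset.mem_filter] at hj
    cases b' with
    | false => rfl
    | true => exact absurd hb' hj.2

lemma not_compatC_symm {d : ℕ} {u v : Fin d → Option Bool} (h : ¬ compatC u v) :
    ¬ compatC v u := fun h' => h (compatC_symm h')

lemma not_compatC_iff {d : ℕ} {u v : Fin d → Option Bool} :
    ¬ compatC u v ↔ ∃ i b b', u i = some b ∧ v i = some b' ∧ b ≠ b' := by
  unfold compatC; push_neg; tauto

lemma key_lemma {d k : ℕ} (hd : 1 ≤ d) (hk : 2 ≤ k) :
    ∀ m, 1 ≤ m → ∀ l, 2 ≤ l → ∀ F : Finset (Fin d), F.card ≤ m →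
    ∀ n, 2 * m ^ (l - 2) * k ≤ n →
    ∀ A : Fin n → (Fin d → Option Bool), (∀ j j', confIn F (A j) (A j')) →
    cubesHaveClique A k ∨ cubesHaveIndep A l := by
  intro m
  induction m with
  | zero => intro hm; omega
  | succ m ih =>
    intro _ l hl F hF n hn A hconf
    classical
    by_cases hm0 : m = 0
    · -- base case: F has at most one element
      subst hm0
      obtain ⟨c, hc⟩ : ∃ c : Fin d, ∀ i ∈ F, i = c := by
        rcases F.eq_empty_or_nonempty with h | ⟨c, hc⟩
        · exact ⟨⟨0, hd⟩, by simp [h]⟩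
        · exact ⟨c, fun i hi => Finset.card_le_one.1 hF i hi c hc⟩
      have hconf' : ∀ j j' : Fin n, confIn {c} (A j) (A j') := by
        intro j j' i b b' hb hb' hne
        rw [Finset.mem_singleton]
        exact hc i (hconf j j' i b b' hb hb' hne)
      left
      exact base_one hd c A hconf' (by simpa using hn)
    · -- inductive step
      have hm1 : 1 ≤ m := Nat.one_le_iff_ne_zero.2 hm0
      have hpow1 : 1 ≤ (m + 1) ^ (l - 2) := Nat.one_le_pow _ _ (Nat.succ_pos m)
      have hn2k : 2 * k ≤ n := le_trans (by nlinarith) hn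
      have hn0 : 0 < n := by omega
      -- maximal pairwise non-compatible (= pairwise disjoint) set
      set P : Finset (Fin n) → Prop :=
        fun s => ∀ i ∈ s, ∀ j ∈ s, i ≠ j → ¬ compatC (A i) (A j) with hP
      have hTne : (Finset.univ.filter P).Nonempty :=
        ⟨∅, Finset.mem_filter.2 ⟨Finset.mem_univ _, by intro i hi; simp at hi⟩⟩
      obtain ⟨s, hsT, hmax⟩ := Finset.exists_max_image (Finset.univ.filter P) Finset.card hTne
      have hsP : P s := (Finset.mem_filter.1 hsT).2
      have hsmax : ∀ s', P s' → s'.card ≤ s.card :=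
        fun s' h => hmax s' (Finset.mem_filter.2 ⟨Finset.mem_univ _, h⟩)
      set t := s.card with htdef
      have ht1 : 1 ≤ t := by
        have : P {⟨0, hn0⟩} := by
          intro i hi j hj hij
          rw [Finset.mem_singleton] at hi hj
          exact absurd (hi.trans hj.symm) hij
        simpa using hsmax _ this
      by_cases htl : l ≤ t
      · -- s itself contains an independent set of size l
        right
        obtain ⟨u, hus, huc⟩ := Finset.exists_subset_card_eq htl
        exact ⟨u, huc, fun i hi j hj hij =>
          (inter_empty_iff _ _).2 (hsP i (hus hi) j (hus hj) hij)⟩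
      have htl' : t ≤ l - 1 := by omega
      by_cases ht2 : t = 1
      · -- no two cubes are disjoint: everything pairwise compatible
        left
        refine clique_of_pairwise A Finset.univ (by simpa using (by omega : k ≤ n)) ?_
        intro i _ j _ hij
        by_contra hnc
        have : P {i, j} := by
          intro a ha b hb hab
          rw [Finset.mem_insert, Finset.mem_singleton] at ha hb
          rcases ha with rfl | rfl <;> rcases hb with rfl | rfl
          · exact absurd rfl hab
          · exact hnc
          · exact not_compatC_symm hnc
          · exact absurd rfl hab
        have := hsmax _ this
        rw [Finset.card_insert_of_notMem (by simpa using hij), Finset.card_singleton] at this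
        omega
      have ht2' : 2 ≤ t := by omega
      -- every cube is compatible with some member of s
      have hcover : ∀ j : Fin n, ∃ p ∈ s, compatC (A j) (A p) := by
        intro j
        by_contra h
        push_neg at h
        have hjs : j ∉ s := fun hj => h j hj (compatC_refl _)
        have : P (insert j s) := by
          intro a ha b hb hab
          rw [Finset.mem_insert] at ha hb
          rcases ha with rfl | ha <;> rcases hb with rfl | hb
          · exact absurd rfl hab
          · exact h b hb
          · exact not_compatC_symm (h a ha)
          · exact hsP a ha b hb hab
        have := hsmax _ this
        rw [Finset.card_insert_of_notMem hjs] at this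
        omega
      -- buckets
      set rank : Fin n → ℕ := fun p => (s.filter (fun q => q < p)).card with hrankdef
      set Bk : Fin n → Finset (Fin n) := fun p => Finset.univ.filter
        (fun j => compatC (A j) (A p) ∧ ∀ q ∈ s, q < p → ¬ compatC (A j) (A q)) with hBkdef
      have hsum : n ≤ ∑ p ∈ s, (Bk p).card := by
        have hsub : (Finset.univ : Finset (Fin n)) ⊆ s.biUnion Bk := by
          intro j _
          set C := s.filter (fun q => compatC (A j) (A q)) with hC
          have hCne : C.Nonempty := by
            obtain ⟨p, hp, hcp⟩ := hcover j
            exact ⟨p, Finset.mem_filter.2 ⟨hp, hcp⟩⟩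
          set p := C.min' hCne with hpdef
          have hpC : p ∈ C := C.min'_mem hCne
          rw [hC, Finset.mem_filter] at hpC
          refine Finset.mem_biUnion.2 ⟨p, hpC.1, Finset.mem_filter.2 ⟨Finset.mem_univ _, hpC.2, ?_⟩⟩
          intro q hq hqp hcq
          have : p ≤ q := C.min'_le q (Finset.mem_filter.2 ⟨hq, hcq⟩)
          exact absurd hqp (not_lt.2 this)
        calc n = (Finset.univ : Finset (Fin n)).card := by simp
        _ ≤ (s.biUnion Bk).card := Finset.card_le_card hsub
        _ ≤ ∑ p ∈ s, (Bk p).card := Finset.card_biUnion_le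
      have hrank_le : ∀ p ∈ s, rank p ≤ t - 1 := by
        intro p hp
        have : s.filter (fun q => q < p) ⊆ s.erase p := by
          intro q hq
          rw [Finset.mem_filter] at hq
          exact Finset.mem_erase.2 ⟨ne_of_lt hq.2, hq.1⟩
        calc rank p ≤ (s.erase p).card := Finset.card_le_card this
        _ = t - 1 := by rw [Finset.card_erase_of_mem hp]
      -- pigeonhole: some bucket is large
      have hex : ∃ p ∈ s, 2 * m ^ (l - 2 - rank p) * k ≤ (Bk p).card := by
        by_contra h
        push_neg at h
        have hlt : ∑ p ∈ s, (Bk p).card < ∑ p ∈ s, 2 * m ^ (l - 2 - rank p) * k :=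
          Finset.sum_lt_sum_of_nonempty (Finset.card_pos.1 ht1) h
        have hrank_mono : ∀ x ∈ s, ∀ y ∈ s, x < y → rank x < rank y := by
          intro x hx y hy hxy
          have hsub : s.filter (fun q => q < x) ⊆ s.filter (fun q => q < y) := by
            intro q hq
            rw [Finset.mem_filter] at hq ⊢
            exact ⟨hq.1, lt_trans hq.2 hxy⟩
          have hss : s.filter (fun q => q < x) ⊂ s.filter (fun q => q < y) :=
            (Finset.ssubset_iff_of_subset hsub).2
              ⟨x, Finset.mem_filter.2 ⟨hx, hxy⟩,
               fun hmem => absurd (Finset.mem_filter.1 hmem).2 (lt_irrefl x)⟩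
          exact Finset.card_lt_card hss
        have hrank_inj : ∀ x ∈ s, ∀ y ∈ s, rank x = rank y → x = y := by
          intro x hx y hy hxy
          by_contra hne
          rcases lt_or_gt_of_ne hne with hlt' | hlt'
          · exact absurd hxy (ne_of_lt (hrank_mono x hx y hy hlt'))
          · exact absurd hxy.symm (ne_of_lt (hrank_mono y hy x hx hlt'))
        have himg : ∑ p ∈ s, 2 * m ^ (l - 2 - rank p) * k
            ≤ ∑ i ∈ Finset.range (l - 1), 2 * m ^ (l - 2 - i) * k := by
          rw [← Finset.sum_image (g := rank) (f := fun i => 2 * m ^ (l - 2 - i) * k) hrank_inj]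
          refine Finset.sum_le_sum_of_subset ?_
          intro i hi
          rw [Finset.mem_image] at hi
          obtain ⟨p, hp, rfl⟩ := hi
          rw [Finset.mem_range]
          have := hrank_le p hp
          omega
        have hrefl : ∑ i ∈ Finset.range (l - 1), 2 * m ^ (l - 2 - i) * k
            = ∑ i ∈ Finset.range (l - 1), 2 * m ^ i * k := by
          rw [← Finset.sum_range_reflect (fun i => 2 * m ^ i * k) (l - 1)]
          refine Finset.sum_congr rfl (fun i hi => ?_)
          have hexp : l - 2 - i = l - 1 - 1 - i := by omega
          rw [hexp]
        have hgeom : ∑ i ∈ Finset.range (l - 1), 2 * m ^ i * k ≤ 2 * (m + 1) ^ (l - 2) * k := by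
          have h1 : ∑ i ∈ Finset.range (l - 1), 2 * m ^ i * k
              = 2 * (∑ i ∈ Finset.range (l - 1), m ^ i) * k := by
            simp only [Finset.mul_sum, Finset.sum_mul]
          rw [h1]
          have h2 : ∑ i ∈ Finset.range (l - 1), m ^ i ≤ (m + 1) ^ (l - 2) := by
            have := geom_sum_le (m := m + 1) (p := l - 2) (by omega)
            simp only [Nat.add_sub_cancel] at this
            have hrange : l - 1 = (l - 2) + 1 := by omega
            rw [hrange]
            exact this
          nlinarith
        have hchain : n < n := calc
          n ≤ ∑ p ∈ s, (Bk p).card := hsum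
          _ < ∑ p ∈ s, 2 * m ^ (l - 2 - rank p) * k := hlt
          _ ≤ ∑ i ∈ Finset.range (l - 1), 2 * m ^ (l - 2 - i) * k := himg
          _ = ∑ i ∈ Finset.range (l - 1), 2 * m ^ i * k := hrefl
          _ ≤ 2 * (m + 1) ^ (l - 2) * k := hgeom
          _ ≤ n := hn
        exact absurd hchain (lt_irrefl n)
      obtain ⟨p, hps, hpbud⟩ := hex
      -- a coordinate of F fixed by A p
      obtain ⟨q, hqs, hqp⟩ := Finset.exists_mem_ne ht2' p
      have hnc : ¬ compatC (A p) (A q) := hsP p hps q hqs (Ne.symm hqp)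
      obtain ⟨c, b0, b1, hpc, hqc, hb01⟩ := not_compatC_iff.1 hnc
      have hcF : c ∈ F := hconf p q c b0 b1 hpc hqc hb01
      -- the bucket family
      set n' := (Bk p).card with hn'def
      set e := (Bk p).orderIsoOfFin hn'def.symm with hedef
      set A' : Fin n' → (Fin d → Option Bool) := fun j => meetC (A p) (A ((e j : Fin n))) with hA'def
      have hmemBk : ∀ j : Fin n', ((e j : Fin n)) ∈ Bk p := fun j => (e j).2
      have hBkprop : ∀ j : Fin n', compatC (A (e j : Fin n)) (A p) ∧
          ∀ q' ∈ s, q' < p → ¬ compatC (A (e j : Fin n)) (A q') := by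
        intro j
        have := hmemBk j
        simp only [hBkdef, Finset.mem_filter] at this
        exact this.2
      have hcompat : ∀ j : Fin n', compatC (A p) (A (e j : Fin n)) :=
        fun j => compatC_symm (hBkprop j).1
      have hconf' : ∀ j j' : Fin n', confIn (F.erase c) (A' j) (A' j') := by
        intro j j' i x y hx hy hxy
        simp only [hA'def, meetC] at hx hy
        cases hpi : A p i with
        | some a =>
          rw [hpi] at hx hy
          simp only [Option.some.injEq] at hx hy
          exact absurd (hx.symm.trans hy) hxy
        | none =>
          rw [hpi] at hx hy
          refine Finset.mem_erase.2 ⟨?_, hconf _ _ i x y hx hy hxy⟩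
          intro hic
          rw [hic, hpc] at hpi
          exact Option.some_ne_none _ hpi
      have hln : 2 ≤ l - rank p := by
        have := hrank_le p hps
        omega
      have hFe : (F.erase c).card ≤ m := by
        rw [Finset.card_erase_of_mem hcF]
        omega
      have hcard' : 2 * m ^ ((l - rank p) - 2) * k ≤ n' := by
        have hexp : (l - rank p) - 2 = l - 2 - rank p := by omega
        rw [hexp]
        exact hpbud
      have hinj : Function.Injective (fun j : Fin n' => (e j : Fin n)) :=
        fun a b hab => e.injective (Subtype.val_injective hab)
      rcases ih hm1 (l - rank p) hln (F.erase c) hFe n' hcard' A' hconf' with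
        ⟨s', hs'c, hs'⟩ | ⟨s', hs'c, hs'⟩
      · -- clique lifts back
        left
        refine ⟨s'.image (fun j => (e j : Fin n)), by rw [Finset.card_image_of_injective _ hinj, hs'c], ?_⟩
        intro i hi j hj hij
        rw [Finset.mem_image] at hi hj
        obtain ⟨j1, hj1, rfl⟩ := hi
        obtain ⟨j2, hj2, rfl⟩ := hj
        have hne : j1 ≠ j2 := fun h => hij (by rw [h])
        have h1 := (inter_nonempty_iff _ _).1 (hs' j1 hj1 j2 hj2 hne)
        exact (inter_nonempty_iff _ _).2
          ((compat_meet_iff (hcompat j1) (hcompat j2)).1 h1)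
      · -- independent set: bucket part plus earlier members of s
        right
        set S1 := s'.image (fun j => (e j : Fin n)) with hS1
        set S2 := s.filter (fun q => q < p) with hS2
        have hS1mem : ∀ j ∈ S1, ∃ j' : Fin n', j' ∈ s' ∧ (e j' : Fin n) = j := by
          intro j hj
          rw [hS1, Finset.mem_image] at hj
          obtain ⟨j', hj', rfl⟩ := hj
          exact ⟨j', hj', rfl⟩
        have hdisj : Disjoint S1 S2 := by
          rw [Finset.disjoint_left]
          intro j hj1 hj2
          obtain ⟨j', _, rfl⟩ := hS1mem j hj1
          rw [hS2, Finset.mem_filter] at hj2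
          exact (hBkprop j').2 _ hj2.1 hj2.2 (compatC_refl _)
        have hnc_mixed : ∀ i ∈ S1, ∀ j ∈ S2, ¬ compatC (A i) (A j) := by
          intro i hi j hj
          obtain ⟨j', _, rfl⟩ := hS1mem i hi
          rw [hS2, Finset.mem_filter] at hj
          exact (hBkprop j').2 _ hj.1 hj.2
        refine ⟨S1 ∪ S2, ?_, ?_⟩
        · rw [Finset.card_union_of_disjoint hdisj, hS1,
            Finset.card_image_of_injective _ hinj, hs'c]
          have := hrank_le p hps
          simp only [hS2, hrankdef] at this ⊢
          omega
        · intro i hi j hj hij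
          rw [Finset.mem_union] at hi hj
          rcases hi with hi | hi <;> rcases hj with hj | hj
          · obtain ⟨j1, hj1, rfl⟩ := hS1mem i hi
            obtain ⟨j2, hj2, rfl⟩ := hS1mem j hj
            have hne : j1 ≠ j2 := fun h => hij (by rw [h])
            have h1 := (inter_empty_iff _ _).1 (hs' j1 hj1 j2 hj2 hne)
            refine (inter_empty_iff _ _).2 ?_
            exact fun hcc => h1 ((compat_meet_iff (hcompat j1) (hcompat j2)).2 hcc)
          · exact (inter_empty_iff _ _).2 (hnc_mixed i hi j hj)
          · exact (inter_empty_iff _ _).2 (not_compatC_symm (hnc_mixed j hj i hi))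
          · rw [hS2, Finset.mem_filter] at hi hj
            exact (inter_empty_iff _ _).2 (hsP i hi.1 j hj.1 hij)

/-- For all `d ≥ 1`, `k ≥ 2`, `l ≥ 2`, `R_d(k,l) ≤ 2·d^(l-2)·k`. -/
theorem Rd_upper_bound {d k l : ℕ} (hd : 1 ≤ d) (hk : 2 ≤ k) (hl : 2 ≤ l) :
    Rd d k l ≤ 2 * d ^ (l - 2) * k := by
  refine Nat.sInf_le ?_
  intro A
  refine key_lemma hd hk d hd l hl Finset.univ (by simp) _ le_rfl A ?_
  intro j j' i b b' _ _ _
  exact Finset.mem_univ i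
end

section
/- Let V be a multiset of subcubes of {0,1}^d whose intersection graph has no independent set of size 3 and no clique of size k, and suppose some pair of subcubes in V is disjoint, with t the maximum codimension of a subcube of V that is disjoint from some other subcube of V. Then |V| ≤ 2^t·(k−1). -/
/-- The codimension of a subcube: the number of fixed coordinates. -/
def codim {d : ℕ} (u : Fin d → Option Bool) : ℕ :=
  (Finset.univ.filter (fun i : Fin d => u i ≠ none)).card

attribute [local instance] Classical.propDecidable

lemma codim_le_dim {d : ℕ} (u : Fin d → Option Bool) : codim u ≤ d := by
  classical
  calc codim u ≤ (Finset.univ : Finset (Fin d)).card := Finset.card_filter_le _ _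
  _ = d := by simp

lemma cube_card {d : ℕ} (u : Fin d → Option Bool) :
    (Finset.univ.filter (fun x : Fin d → Bool => x ∈ cubeSet u)).card = 2 ^ (d - codim u) := by
  classical
  have h1 : (Finset.univ.filter (fun x : Fin d → Bool => x ∈ cubeSet u))
      = Fintype.piFinset (fun i => (u i).elim Finset.univ (fun b => {b})) := by
    ext x
    simp only [Finset.mem_filter, Finset.mem_univ, true_and, Fintype.mem_piFinset, cubeSet,
      Set.mem_setOf_eq]
    constructor
    · intro h i
      cases hu : u i with
      | none => simp
      | some b => simp [h i b hu]
    · intro h i b hb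
      have := h i
      rw [hb] at this
      simpa using this
  rw [h1, Fintype.card_piFinset]
  have h2 : ∀ i : Fin d, ((u i).elim Finset.univ (fun b => ({b} : Finset Bool))).card
      = 2 ^ (if u i = none then 1 else 0) := by
    intro i
    cases hu : u i with
    | none => simp
    | some b => simp
  simp_rw [h2]
  rw [Finset.prod_pow_eq_pow_sum]
  congr 1
  rw [← Finset.card_filter]
  have h3 : (Finset.univ.filter (fun i : Fin d => u i = none)).card
      + (Finset.univ.filter (fun i : Fin d => ¬ u i = none)).card = d := by
    rw [Finset.card_filter_add_card_filter_not]
    simp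
  have h4 : codim u = (Finset.univ.filter (fun i : Fin d => ¬ u i = none)).card := rfl
  omega

/-- If a multiset of subcubes of `{0,1}^d` has no independent set of size 3 and no
clique of size `k` in its intersection graph, some pair of its subcubes is disjoint,
and `t` is the maximum codimension of a subcube disjoint from some other subcube of
the family, then the family has at most `2^t·(k-1)` members. -/
theorem codim_count_bound {d n k t : ℕ} (A : Fin n → (Fin d → Option Bool))
    (hindep : ¬ cubesHaveIndep A 3) (hclique : ¬ cubesHaveClique A k)
    (hex : ∃ i j : Fin n, i ≠ j ∧ cubeSet (A i) ∩ cubeSet (A j) = ∅ ∧ codim (A i) = t)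
    (hmax : ∀ i j : Fin n, i ≠ j → cubeSet (A i) ∩ cubeSet (A j) = ∅ →
      codim (A i) ≤ t) :
    n ≤ 2 ^ t * (k - 1) := by
  classical
  have hk : 1 ≤ k := by
    by_contra h
    push_neg at h
    interval_cases k
    exact hclique ⟨∅, by simp⟩
  obtain ⟨i0, j0, hij, hdisj, hcodim⟩ := hex
  have ht : t ≤ d := hcodim ▸ codim_le_dim (A i0)
  set B : Fin n → (Fin d → Option Bool) :=
    fun i => if codim (A i) ≤ t then A i else fun _ => none with hB
  have hBcodim : ∀ i, codim (B i) ≤ t := by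
    intro i
    by_cases h : codim (A i) ≤ t
    · simpa [hB, h] using h
    · have hBi : B i = fun _ => none := by simp [hB, h]
      rw [hBi]
      simp [codim]
  have key : ∀ x : Fin d → Bool,
      (Finset.univ.filter (fun i => x ∈ cubeSet (B i))).card ≤ k - 1 := by
    intro x
    by_contra hcard
    push_neg at hcard
    have hk' : k ≤ (Finset.univ.filter (fun i => x ∈ cubeSet (B i))).card := by omega
    obtain ⟨s, hs_sub, hs_card⟩ := Finset.exists_subset_card_eq hk'
    apply hclique
    refine ⟨s, hs_card, ?_⟩
    intro i hi j hj hijne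
    by_cases h1 : codim (A i) ≤ t
    · by_cases h2 : codim (A j) ≤ t
      · have hxi : x ∈ cubeSet (A i) := by
          have := (Finset.mem_filter.mp (hs_sub hi)).2
          simpa [hB, h1] using this
        have hxj : x ∈ cubeSet (A j) := by
          have := (Finset.mem_filter.mp (hs_sub hj)).2
          simpa [hB, h2] using this
        exact ⟨x, hxi, hxj⟩
      · rw [Set.nonempty_iff_ne_empty]
        intro hemp
        exact h2 (hmax j i (Ne.symm hijne) (by rwa [Set.inter_comm] at hemp))
    · rw [Set.nonempty_iff_ne_empty]
      intro hemp
      exact h1 (hmax i j hijne hemp)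
  have count1 : ∀ i, 2 ^ (d - t)
      ≤ (Finset.univ.filter (fun x : Fin d → Bool => x ∈ cubeSet (B i))).card := by
    intro i
    rw [cube_card]
    exact Nat.pow_le_pow_right (by norm_num) (Nat.sub_le_sub_left (hBcodim i) d)
  have main : n * 2 ^ (d - t) ≤ 2 ^ d * (k - 1) := by
    calc n * 2 ^ (d - t) = ∑ _i : Fin n, 2 ^ (d - t) := by
          simp [Finset.sum_const, Finset.card_univ, mul_comm]
    _ ≤ ∑ i : Fin n, (Finset.univ.filter (fun x : Fin d → Bool => x ∈ cubeSet (B i))).card :=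
          Finset.sum_le_sum (fun i _ => count1 i)
    _ = ∑ x : Fin d → Bool, (Finset.univ.filter (fun i => x ∈ cubeSet (B i))).card := by
          simp_rw [Finset.card_filter]
          exact Finset.sum_comm
    _ ≤ ∑ _x : Fin d → Bool, (k - 1) := Finset.sum_le_sum (fun x _ => key x)
    _ = 2 ^ d * (k - 1) := by simp [Finset.sum_const, Finset.card_univ]
  have h2d : (2 : ℕ) ^ d = 2 ^ (d - t) * 2 ^ t := by
    rw [← pow_add]
    congr 1
    omega
  have hfin : n * 2 ^ (d - t) ≤ (2 ^ t * (k - 1)) * 2 ^ (d - t) := by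
    calc n * 2 ^ (d - t) ≤ 2 ^ d * (k - 1) := main
    _ = (2 ^ t * (k - 1)) * 2 ^ (d - t) := by rw [h2d]; ring
  exact Nat.le_of_mul_le_mul_right hfin (by positivity)
end

section
/- Fix integers k ≥ 2 and d ≥ 1 with t = ⌊d/k⌋, and let n ≤ k·2^t. Then the Turán graph T_k(n) (the complete k-partite graph on n vertices with parts as equal as possible) is the intersection graph of n subcubes of {0,1}^d; in particular, for every r ≥ k there is a K_{r+1}-free intersection graph of n subcubes of {0,1}^d with exactly t_k(n) edges. -/
lemma cube_inter_nonempty {d : ℕ} (u w : Fin d → Option Bool)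
    (h : ∀ i b b', u i = some b → w i = some b' → b = b') :
    (cubeSet u ∩ cubeSet w).Nonempty := by
  refine ⟨fun i => (u i).getD ((w i).getD false), ?_, ?_⟩
  · intro i b hb; simp [hb]
  · intro i b hb
    cases hu : u i with
    | none => simp [hu, hb]
    | some b' => simpa [hu] using h i b' b hu hb

/-- For `t = ⌊d/k⌋` and `n ≤ k·2^t`, the Turán graph `T_k(n)` is the intersection
graph of `n` subcubes of `{0,1}^d`; in particular, for every `r ≥ k` this gives a
`K_{r+1}`-free intersection graph of `n` subcubes with `t_k(n)` edges. -/
theorem turan_graph_subcube_representation {d k t n : ℕ}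
    (hk : 1 ≤ k) (ht : t = d / k) (hn : n ≤ k * 2 ^ t) :
    ∃ A : Fin n → (Fin d → Option Bool),
      (∀ i j : Fin n, i ≠ j →
        ((cubeSet (A i) ∩ cubeSet (A j)).Nonempty ↔ (SimpleGraph.turanGraph n k).Adj i j)) ∧
      (∀ r : ℕ, k ≤ r →
        ¬ ∃ s : Finset (Fin n), s.card = r + 1 ∧
          ∀ i ∈ s, ∀ j ∈ s, i ≠ j → (cubeSet (A i) ∩ cubeSet (A j)).Nonempty) := by
  have hkt : k * t ≤ d := by
    subst ht
    calc k * (d / k) = d / k * k := Nat.mul_comm _ _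
    _ ≤ d := Nat.div_mul_le_self d k
  set A : Fin n → Fin d → Option Bool := fun v i =>
    if ((i : ℕ) < k * t ∧ (i : ℕ) / t = (v : ℕ) % k)
    then some (Nat.testBit ((v : ℕ) / k) ((i : ℕ) % t)) else none with hA
  have key : ∀ i j : Fin n, i ≠ j →
      ((cubeSet (A i) ∩ cubeSet (A j)).Nonempty ↔ (i : ℕ) % k ≠ (j : ℕ) % k) := by
    intro i j hij
    constructor
    · rintro ⟨x, hx1, hx2⟩ hmod
      have hdiv : (i : ℕ) / k ≠ (j : ℕ) / k := by
        intro h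
        apply hij
        apply Fin.ext
        rw [← Nat.div_add_mod (i : ℕ) k, ← Nat.div_add_mod (j : ℕ) k, h, hmod]
      -- find differing bit below t
      have hilt : (i : ℕ) / k < 2 ^ t := Nat.div_lt_of_lt_mul (lt_of_lt_of_le i.2 hn)
      have hjlt : (j : ℕ) / k < 2 ^ t := Nat.div_lt_of_lt_mul (lt_of_lt_of_le j.2 hn)
      have hbit : ∃ p, Nat.testBit ((i : ℕ) / k) p ≠ Nat.testBit ((j : ℕ) / k) p := by
        by_contra hc
        push_neg at hc
        exact hdiv (Nat.eq_of_testBit_eq hc)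
      obtain ⟨p, hp⟩ := hbit
      have hplt : p < t := by
        by_contra hpt
        push_neg at hpt
        have e1 : Nat.testBit ((i : ℕ) / k) p = false :=
          Nat.testBit_eq_false_of_lt (lt_of_lt_of_le hilt (Nat.pow_le_pow_right (by norm_num) hpt))
        have e2 : Nat.testBit ((j : ℕ) / k) p = false :=
          Nat.testBit_eq_false_of_lt (lt_of_lt_of_le hjlt (Nat.pow_le_pow_right (by norm_num) hpt))
        exact hp (e1.trans e2.symm)
      set c := (i : ℕ) % k with hc
      have hck : c < k := Nat.mod_lt _ (by omega)
      have hlt_kt : c * t + p < k * t := by nlinarith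
      have hcoord : c * t + p < d := lt_of_lt_of_le hlt_kt hkt
      set i0 : Fin d := ⟨c * t + p, hcoord⟩ with hi0
      have htpos : 0 < t := by omega
      have hdivt : (c * t + p) / t = c := by
        rw [Nat.mul_comm, Nat.mul_add_div htpos, Nat.div_eq_of_lt hplt, Nat.add_zero]
      have hmodt : (c * t + p) % t = p := by
        rw [Nat.mul_add_mod']
        exact Nat.mod_eq_of_lt hplt
      have hAi : A i i0 = some (Nat.testBit ((i : ℕ) / k) p) := by
        show (if ((c * t + p) < k * t ∧ (c * t + p) / t = (i : ℕ) % k)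
          then some (Nat.testBit ((i : ℕ) / k) ((c * t + p) % t)) else none) = _
        rw [if_pos ⟨hlt_kt, by rw [hdivt]⟩, hmodt]
      have hAj : A j i0 = some (Nat.testBit ((j : ℕ) / k) p) := by
        show (if ((c * t + p) < k * t ∧ (c * t + p) / t = (j : ℕ) % k)
          then some (Nat.testBit ((j : ℕ) / k) ((c * t + p) % t)) else none) = _
        rw [if_pos ⟨hlt_kt, by rw [hdivt]; exact hmod⟩, hmodt]
      have e1 := hx1 i0 _ hAi
      have e2 := hx2 i0 _ hAj
      exact hp (e1 ▸ e2 ▸ rfl)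
    · intro hmod
      apply cube_inter_nonempty
      intro i0 b b' hb hb'
      simp only [hA] at hb hb'
      split_ifs at hb hb' with h1 h2
      exact absurd (h1.2.symm.trans h2.2) hmod
  refine ⟨A, fun i j hij => (key i j hij).trans (by rfl), ?_⟩
  rintro r hr ⟨s, hcard, hcl⟩
  have hle : s.card ≤ (Finset.univ : Finset (Fin k)).card := by
    refine Finset.card_le_card_of_injOn
      (fun v => (⟨(v : ℕ) % k, Nat.mod_lt _ (by omega)⟩ : Fin k))
      (fun a _ => Finset.mem_univ _) ?_
    intro a ha b hb hab
    by_contra hne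
    have := (key a b hne).mp (hcl a ha b hb hne)
    exact this (by simpa using congrArg Fin.val hab)
  simp [Finset.card_univ, hcard] at hle
  omega
end
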